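/- arXiv:2103.08278 — 11 statements merged into one kernel-verified Lean document; each statement's English description precedes it below -/
import Mathlib

section
/- Let R be an NP-ring. An R-module M is nonnil-injective (Ext¹_R(T,M) = 0 for every φ-torsion module T) if and only if Ext¹_R(R/I, M) = 0 for every nonnil ideal I of R. -/
open CategoryTheory

/-- An `R`-module is φ-torsion if every element is annihilated by some nonnil ideal. -/
def IsPhiTorsion (R : Type*) [CommRing R] (M : Type*) [AddCommGroup M] [Module R M] : Prop :=
  ∀ x : M, ∃ I : Ideal R, ¬ I ≤ nilradical R ∧ ∀ a ∈ I, a • x = 0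

noncomputable section NonnilAux

open CategoryTheory Limits

universe v

variable {R : Type v} [CommRing R]

/-- Every map from `K` to `M` extends to the ambient module. -/
def NonnilAux.ExtendsTo {B : Type v} [AddCommGroup B] [Module R B] (K : Submodule R B)
    (M : Type v) [AddCommGroup M] [Module R M] : Prop :=
  ∀ f : K →ₗ[R] M, ∃ g : B →ₗ[R] M, ∀ x : K, g x = f x

open NonnilAux

lemma NonnilAux.factor_through' {A B M : Type v} [AddCommGroup A] [Module R A] [AddCommGroup B]
    [Module R B] [AddCommGroup M] [Module R M]
    (p : A →ₗ[R] B) (f : A →ₗ[R] M) (h : ∀ a, p a = 0 → f a = 0) :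
    ∃ F : LinearMap.range p →ₗ[R] M, ∀ a : A, F ⟨p a, ⟨a, rfl⟩⟩ = f a := by
  refine ⟨(Submodule.liftQ (LinearMap.ker p) f (fun a ha => h a ha)).comp
    (p.quotKerEquivRange.symm : LinearMap.range p →ₗ[R] A ⧸ LinearMap.ker p), fun a => ?_⟩
  have : (p.quotKerEquivRange.symm) ⟨p a, ⟨a, rfl⟩⟩ = Submodule.Quotient.mk a := by
    rw [LinearEquiv.symm_apply_eq]
    exact Subtype.ext (p.quotKerEquivRange_apply_mk a)
  simp [this, Submodule.liftQ_apply]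
  rfl

lemma NonnilAux.extends_transfer {A B M X : Type v} [AddCommGroup A] [Module R A]
    [AddCommGroup B] [Module R B] [AddCommGroup M] [Module R M] [AddCommGroup X] [Module R X]
    (π : A →ₗ[R] X) (π' : B →ₗ[R] X) (hπ : Function.Surjective π)
    (hπ' : Function.Surjective π') [Module.Projective R A] [Module.Projective R B]
    (h : ExtendsTo (LinearMap.ker π') M) : ExtendsTo (LinearMap.ker π) M := by
  obtain ⟨k, hk⟩ := Module.projective_lifting_property π π' hπ
  obtain ⟨h₀, hh₀⟩ := Module.projective_lifting_property π' π hπ'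
  intro f
  have hkmap : ∀ x ∈ LinearMap.ker π', k x ∈ LinearMap.ker π := by
    intro x hx
    simp only [LinearMap.mem_ker] at hx ⊢
    rw [← LinearMap.comp_apply, hk, hx]
  obtain ⟨G, hG⟩ := h (f.comp (k.restrict hkmap))
  set δ₀ : A →ₗ[R] A := k.comp h₀ - LinearMap.id with hδ₀
  have hδ : ∀ x ∈ (⊤ : Submodule R A), δ₀ x ∈ LinearMap.ker π := by
    intro x _
    simp only [hδ₀, LinearMap.mem_ker, LinearMap.sub_apply, LinearMap.comp_apply,
      LinearMap.id_apply, map_sub]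
    rw [← LinearMap.comp_apply π k, hk, ← LinearMap.comp_apply π' h₀, hh₀, sub_self]
  set δ : A →ₗ[R] LinearMap.ker π :=
    (δ₀.restrict hδ).comp (LinearMap.id.codRestrict ⊤ (fun _ => trivial))
  refine ⟨(G.comp h₀) - f.comp δ, fun x => ?_⟩
  have hx' : h₀ (x : A) ∈ LinearMap.ker π' := by
    simp only [LinearMap.mem_ker]
    rw [← LinearMap.comp_apply, hh₀]
    exact x.2
  have h1 : G (h₀ (x : A)) = f ⟨k (h₀ (x : A)), hkmap _ hx'⟩ := by
    have := hG ⟨h₀ (x : A), hx'⟩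
    simpa [LinearMap.restrict_apply] using this
  have h2 : δ (x : A) = ⟨k (h₀ (x : A)) - (x : A), hδ _ trivial⟩ := by
    apply Subtype.ext
    simp [δ, hδ₀, LinearMap.restrict_apply, LinearMap.codRestrict_apply]
    rfl
  have h3 : (⟨k (h₀ (x : A)), hkmap _ hx'⟩ : LinearMap.ker π) -
      ⟨k (h₀ (x : A)) - (x : A), hδ _ trivial⟩ = x := by
    apply Subtype.ext; simp
  calc (G.comp h₀ - f.comp δ) (x : A)
      = G (h₀ (x : A)) - f (δ (x : A)) := rfl
    _ = f ⟨k (h₀ (x : A)), hkmap _ hx'⟩ - f ⟨k (h₀ (x : A)) - (x : A), hδ _ trivial⟩ := by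
        rw [h1, h2]
    _ = f x := by rw [← map_sub, h3]

lemma NonnilAux.baer_extends {B M : Type v} [AddCommGroup B] [Module R B] [AddCommGroup M]
    [Module R M]
    (hB : ∀ I : Ideal R, ¬ I ≤ nilradical R →
      ∀ f : I →ₗ[R] M, ∃ g : R →ₗ[R] M, ∀ x : I, g x = f x)
    (K : Submodule R B)
    (htor : ∀ x : B, ∃ I : Ideal R, ¬ I ≤ nilradical R ∧ ∀ a ∈ I, a • x ∈ K)
    (f : K →ₗ[R] M) : ∃ g : B →ₗ[R] M, ∀ x : K, g x = f x := by
  classical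
  set f₀ : B →ₗ.[R] M := ⟨K, f⟩ with hf₀
  set S : Set (B →ₗ.[R] M) := {g | f₀ ≤ g} with hS
  have hzorn : ∀ c ⊆ S, IsChain (· ≤ ·) c → ∀ y ∈ c, ∃ ub ∈ S, ∀ z ∈ c, z ≤ ub := by
    intro c hcS hchain y hy
    have hdir : DirectedOn (· ≤ ·) c := hchain.directedOn
    refine ⟨LinearPMap.sSup c hdir, ?_, fun z hz => LinearPMap.le_sSup hdir hz⟩
    exact le_trans (hcS hy) (LinearPMap.le_sSup hdir hy)
  obtain ⟨m, hf₀m, hmax⟩ := zorn_le_nonempty₀ S hzorn f₀ (le_refl f₀)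
  have hmS : f₀ ≤ m := hmax.1
  have htop : m.domain = ⊤ := by
    by_contra hne
    obtain ⟨x, hx⟩ : ∃ x : B, x ∉ m.domain := by
      by_contra h
      push_neg at h
      exact hne (Submodule.eq_top_iff'.2 h)
    set J : Ideal R := Submodule.comap (LinearMap.toSpanSingleton R B x) m.domain with hJ
    obtain ⟨I, hInn, hIx⟩ := htor x
    have hJnn : ¬ J ≤ nilradical R := by
      intro hle
      refine hInn (le_trans ?_ hle)
      intro a ha
      have hK : K ≤ m.domain := hmS.1
      simpa [hJ, LinearMap.toSpanSingleton_apply] using hK (hIx a ha)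
    set h : J →ₗ[R] M :=
      m.toFun.comp ((LinearMap.toSpanSingleton R B x).restrict
        (p := J) (q := m.domain) (fun r hr => hr)) with hh
    obtain ⟨H, hH⟩ := hB J hJnn h
    set mval : M := H 1 with hmval
    have hJval : ∀ r : R, ∀ hr : r ∈ J, m ⟨r • x, hr⟩ = r • mval := by
      intro r hr
      have h1 : h ⟨r, hr⟩ = m ⟨r • x, hr⟩ := rfl
      have h2 := hH ⟨r, hr⟩
      rw [h1] at h2
      rw [← h2, hmval, ← map_smul, smul_eq_mul, mul_one]
    set φ : (m.domain × R) →ₗ[R] B :=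
      m.domain.subtype.comp (LinearMap.fst R m.domain R)
        + (LinearMap.toSpanSingleton R B x).comp (LinearMap.snd R m.domain R) with hφ
    set ψ : (m.domain × R) →ₗ[R] M :=
      m.toFun.comp (LinearMap.fst R m.domain R)
        + (LinearMap.toSpanSingleton R M mval).comp (LinearMap.snd R m.domain R) with hψ
    have hφ_apply : ∀ (d : m.domain) (r : R), φ (d, r) = (d : B) + r • x := by
      intro d r
      simp [hφ, LinearMap.toSpanSingleton_apply]
    have hψ_apply : ∀ (d : m.domain) (r : R), ψ (d, r) = m d + r • mval := by
      intro d r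
      simp [hψ, LinearMap.toSpanSingleton_apply, LinearPMap.toFun_eq_coe]
    have hker : ∀ a, φ a = 0 → ψ a = 0 := by
      rintro ⟨d, r⟩ h0
      rw [hφ_apply] at h0
      have hrx : r • x = -(d : B) := by rwa [add_comm, add_eq_zero_iff_eq_neg] at h0
      have hrJ : r ∈ J := by
        simp only [hJ, Submodule.mem_comap, LinearMap.toSpanSingleton_apply, hrx]
        exact neg_mem d.2
      rw [hψ_apply, ← hJval r hrJ, ← LinearPMap.map_add]
      have : (d + ⟨r • x, hrJ⟩ : m.domain) = 0 := Subtype.ext (by simpa using h0)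
      rw [this, LinearPMap.map_zero]
    obtain ⟨F, hF⟩ := NonnilAux.factor_through' φ ψ hker
    set m' : B →ₗ.[R] M := ⟨LinearMap.range φ, F⟩ with hm'
    have hmm' : m ≤ m' := by
      constructor
      · intro d hd
        exact ⟨(⟨d, hd⟩, 0), by simp [hφ_apply]⟩
      · intro a b hab
        have hbeq : b = ⟨φ (a, 0), ⟨(a, 0), rfl⟩⟩ := Subtype.ext (by simp [hφ_apply, hab.symm])
        rw [hbeq]
        show m a = F ⟨φ (a, 0), ⟨(a, 0), rfl⟩⟩
        rw [hF (a, 0), hψ_apply]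
        simp
    have hm'S : m' ∈ S := le_trans hmS hmm'
    have hle : m' ≤ m := hmax.2 hm'S hmm'
    apply hx
    apply hle.1
    exact ⟨(0, 1), by simp [hφ_apply]⟩
  refine ⟨m.toFun.comp (LinearMap.id.codRestrict m.domain
    (fun b => htop ▸ Submodule.mem_top)), fun y => ?_⟩
  have := hmS.2 (x := y) (y := ⟨(y : B), htop ▸ Submodule.mem_top⟩) rfl
  exact this.symm

lemma NonnilAux.subsingleton_iff_isZero (X : ModuleCat.{v} R) : Subsingleton X ↔ IsZero X := by
  constructor
  · intro h
    exact ModuleCat.isZero_of_subsingleton X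
  · intro h
    have h0 : (𝟙 X : X ⟶ X) = 0 := h.eq_of_src _ _
    refine ⟨fun a b => ?_⟩
    have ha : a = (𝟙 X : X ⟶ X) a := rfl
    have hb : b = (𝟙 X : X ⟶ X) b := rfl
    rw [ha, hb, h0]
    rfl

lemma NonnilAux.subsingleton_ext_one_iff (X M : ModuleCat.{v} R) (P : ProjectiveResolution X) :
    Subsingleton (((Ext R (ModuleCat.{v} R) 1).obj (Opposite.op X)).obj M) ↔
    ∀ f : P.complex.X 1 ⟶ M, P.complex.d 2 1 ≫ f = 0 →
      ∃ g : P.complex.X 0 ⟶ M, P.complex.d 1 0 ≫ g = f := by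
  rw [NonnilAux.subsingleton_iff_isZero]
  have e := P.isoExt (R := R) 1 M
  set C := P.complex.linearYonedaObj R M with hC
  have h1 : IsZero (((Ext R (ModuleCat.{v} R) 1).obj (Opposite.op X)).obj M) ↔
      IsZero (C.homology 1) := ⟨fun h => h.of_iso e.symm, fun h => h.of_iso e⟩
  rw [h1, ← HomologicalComplex.exactAt_iff_isZero_homology,
    HomologicalComplex.exactAt_iff' C 0 1 2 (by simp [CochainComplex.prev]) (by simp),
    ShortComplex.moduleCat_exact_iff]
  constructor
  · intro h f hf
    obtain ⟨g, hg⟩ := h f (by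
      show (Linear.leftComp R M (P.complex.d 2 1)) f = 0
      simpa [Linear.leftComp] using hf)
    exact ⟨g, hg⟩
  · intro h f hf
    obtain ⟨g, hg⟩ := h f (by
      have : (Linear.leftComp R M (P.complex.d 2 1)) f = 0 := hf
      simpa [Linear.leftComp] using this)
    exact ⟨g, hg⟩

lemma NonnilAux.cond_iff_extendsTo (X M : ModuleCat.{v} R) (P : ProjectiveResolution X) :
    (∀ f : P.complex.X 1 ⟶ M, P.complex.d 2 1 ≫ f = 0 →
      ∃ g : P.complex.X 0 ⟶ M, P.complex.d 1 0 ≫ g = f) ↔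
    ExtendsTo (LinearMap.range (P.complex.d 1 0).hom) M := by
  set d10 : P.complex.X 1 →ₗ[R] P.complex.X 0 := (P.complex.d 1 0).hom with hd10
  set d21 : P.complex.X 2 →ₗ[R] P.complex.X 1 := (P.complex.d 2 1).hom with hd21
  have hexact : LinearMap.range d21 = LinearMap.ker d10 :=
    (P.exact_succ 0).moduleCat_range_eq_ker
  constructor
  · intro h f'
    set f : P.complex.X 1 ⟶ M := ModuleCat.ofHom (f'.comp d10.rangeRestrict : P.complex.X 1 →ₗ[R] M) with hf
    have hcomp : P.complex.d 2 1 ≫ f = 0 := by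
      refine ModuleCat.hom_ext (LinearMap.ext fun a => ?_)
      show f.hom (d21 a) = 0
      have : d10.rangeRestrict (d21 a) = 0 := by
        apply Subtype.ext
        have : d21 a ∈ LinearMap.ker d10 := hexact ▸ ⟨a, rfl⟩
        simpa using this
      rw [hf]
      show f' (d10.rangeRestrict (d21 a)) = 0
      rw [this, map_zero]
    obtain ⟨g, hg⟩ := h f hcomp
    refine ⟨g.hom, fun y => ?_⟩
    obtain ⟨a, ha⟩ := y.2
    have h1 : (y : P.complex.X 0) = d10 a := ha.symm
    have h2 : g.hom (d10 a) = f.hom a := by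
      rw [← hg]; rfl
    have h3 : f.hom a = f' ⟨d10 a, ⟨a, rfl⟩⟩ := rfl
    have h4 : y = ⟨d10 a, ⟨a, rfl⟩⟩ := Subtype.ext h1
    rw [h4]
    exact h2.trans h3
  · intro h f hcomp
    obtain ⟨F, hF⟩ := NonnilAux.factor_through' d10 f.hom (by
      intro a ha
      have : a ∈ LinearMap.range d21 := hexact ▸ ha
      obtain ⟨b, hb⟩ := this
      have := congrFun (congrArg (fun (q : P.complex.X 2 ⟶ M) => (q.hom : P.complex.X 2 → M)) hcomp) b
      show f.hom a = 0
      rw [← hb]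
      exact this)
    obtain ⟨g, hg⟩ := h F
    refine ⟨ModuleCat.ofHom g, ?_⟩
    refine ModuleCat.hom_ext (LinearMap.ext fun a => ?_)
    show g (d10 a) = f.hom a
    rw [← hF a]
    exact hg ⟨d10 a, ⟨a, rfl⟩⟩

end NonnilAux

open NonnilAux in
/-- Over an NP-ring, `M` is nonnil-injective (`Ext¹(T,M) = 0` for all
φ-torsion `T`) iff `Ext¹(R/I, M) = 0` for every nonnil ideal `I`. -/
theorem stmt_3 (R : Type u) [CommRing R] (hNP : (nilradical R).IsPrime)
    (M : ModuleCat.{u} R) :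
    (∀ T : ModuleCat.{u} R, IsPhiTorsion R T →
        Subsingleton (((Ext R (ModuleCat.{u} R) 1).obj (Opposite.op T)).obj M)) ↔
      (∀ I : Ideal R, ¬ I ≤ nilradical R →
        Subsingleton (((Ext R (ModuleCat.{u} R) 1).obj
          (Opposite.op (ModuleCat.of R (R ⧸ I)))).obj M)) := by
  classical
  constructor
  · intro hT I hInn
    apply hT
    intro x
    obtain ⟨r, rfl⟩ := Ideal.Quotient.mk_surjective x
    refine ⟨I, hInn, fun a ha => ?_⟩
    show a • (Ideal.Quotient.mk I) r = 0
    rw [← Ideal.Quotient.mk_eq_mk, ← Submodule.Quotient.mk_smul, Submodule.Quotient.mk_eq_zero,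
      smul_eq_mul]
    exact Ideal.mul_mem_right r I ha
  · intro hext T hT
    let P : ProjectiveResolution T := ProjectiveResolution.of T
    rw [NonnilAux.subsingleton_ext_one_iff T M P, NonnilAux.cond_iff_extendsTo T M P]
    have hB : ∀ I : Ideal R, ¬ I ≤ nilradical R →
        ∀ f : I →ₗ[R] ↑M, ∃ g : R →ₗ[R] ↑M, ∀ x : I, g x = f x := by
      intro I hInn
      have hsub := hext I hInn
      let Q : ProjectiveResolution (ModuleCat.of R (R ⧸ I)) :=
        ProjectiveResolution.of (ModuleCat.of R (R ⧸ I))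
      rw [NonnilAux.subsingleton_ext_one_iff _ M Q, NonnilAux.cond_iff_extendsTo _ M Q] at hsub
      have hkerQ : LinearMap.range (Q.complex.d 1 0).hom
          = LinearMap.ker (Q.π.f 0).hom :=
        Q.exact₀.moduleCat_range_eq_ker
      haveI : Module.Projective R ↑(Q.complex.X 0) :=
        (IsProjective.iff_projective _).mpr
          (show Projective (ModuleCat.of R ↑(Q.complex.X 0)) from Q.projective 0)
      have hQsurj : Function.Surjective (Q.π.f 0).hom :=
        (ModuleCat.epi_iff_surjective (Q.π.f 0)).1 inferInstance
      have h2 : ExtendsTo (LinearMap.ker (I.mkQ)) (↑M : Type u) :=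
        NonnilAux.extends_transfer I.mkQ (Q.π.f 0).hom
          (Submodule.mkQ_surjective I) hQsurj (hkerQ ▸ hsub)
      rw [Submodule.ker_mkQ] at h2
      exact h2
    intro f
    refine NonnilAux.baer_extends hB _ (fun x => ?_) f
    obtain ⟨I, hInn, hIa⟩ := hT ((P.π.f 0).hom x)
    refine ⟨I, hInn, fun a ha => ?_⟩
    have hker : LinearMap.range (P.complex.d 1 0).hom
        = LinearMap.ker (P.π.f 0).hom :=
      P.exact₀.moduleCat_range_eq_ker
    rw [hker, LinearMap.mem_ker, map_smul]
    exact hIa a ha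
end

section
/- Let R be an NP-ring and M an R-module. If M is φ-flat, then for every injective R-module E, the module Hom_R(M,E) is nonnil-injective. -/
open CategoryTheory

universe u

section Aux

open LinearMap TensorProduct Function

variable {R : Type u} [CommRing R]

/-- Transfer `Subsingleton` along an isomorphism in `ModuleCat`. -/
lemma subsingleton_of_iso {X Y : ModuleCat.{u} R} (e : X ≅ Y) [h : Subsingleton X] :
    Subsingleton Y :=
  Equiv.subsingleton (e.symm.toLinearEquiv.toEquiv)

lemma subsingleton_of_isZero {X : ModuleCat.{u} R} (h : Limits.IsZero X) :
    Subsingleton X := by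
  refine ⟨fun a b => ?_⟩
  have hid : (𝟙 X : X ⟶ X) = 0 := h.eq_of_src _ _
  have ha : (𝟙 X : X ⟶ X) a = a := rfl
  have hb : (𝟙 X : X ⟶ X) b = b := rfl
  rw [hid] at ha hb
  rw [← ha, ← hb]
  exact (LinearMap.zero_apply a).trans (LinearMap.zero_apply b).symm

/-- Torsion-side chase: if `H₁` of `T ⊗ (X₂ → X₁ → X₀)` vanishes, then tensoring the
inclusion of `range d10` with `T` is injective. -/
lemma aux_lTensor_subtype_injective {T X2 X1 X0 : Type u}
    [AddCommGroup T] [Module R T] [AddCommGroup X2] [Module R X2]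
    [AddCommGroup X1] [Module R X1] [AddCommGroup X0] [Module R X0]
    (d21 : X2 →ₗ[R] X1) (d10 : X1 →ₗ[R] X0) (hd : ∀ x, d10 (d21 x) = 0)
    (hexact : ∀ u : T ⊗[R] X1, lTensor T d10 u = 0 → ∃ v : T ⊗[R] X2, lTensor T d21 v = u) :
    Function.Injective (lTensor T (LinearMap.range d10).subtype) := by
  rw [injective_iff_map_eq_zero]
  intro t ht
  obtain ⟨u, rfl⟩ := lTensor_surjective T d10.surjective_rangeRestrict t
  have hcomp : (LinearMap.range d10).subtype ∘ₗ d10.rangeRestrict = d10 := by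
    ext x; rfl
  have h1 : lTensor T d10 u = 0 := by
    rw [← hcomp, lTensor_comp, LinearMap.comp_apply, ht]
  obtain ⟨v, rfl⟩ := hexact u h1
  rw [← LinearMap.comp_apply, ← lTensor_comp]
  have hzero : d10.rangeRestrict ∘ₗ d21 = 0 := by
    apply LinearMap.ext; intro x; apply Subtype.ext; simpa using hd x
  rw [hzero, lTensor_zero, LinearMap.zero_apply]

/-- The main diagram chase: given a presentation `0 → K → F → T → 0` with `F` flat and a
presentation `0 → S → G → M → 0` with `G` flat, if `T ⊗ S → T ⊗ G` is injective then
`K ⊗ M → F ⊗ M` is injective. -/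
lemma key_chase {K F T S G M : Type u}
    [AddCommGroup K] [Module R K] [AddCommGroup F] [Module R F]
    [AddCommGroup T] [Module R T] [AddCommGroup S] [Module R S]
    [AddCommGroup G] [Module R G] [AddCommGroup M] [Module R M]
    (i : K →ₗ[R] F) (q : F →ₗ[R] T) (j : S →ₗ[R] G) (p : G →ₗ[R] M)
    (hi : Function.Injective i) (hq : Surjective q) (hiq : Function.Exact i q)
    (hp : Surjective p) (hjp : Function.Exact j p)
    [Module.Flat R G]
    (hTj : Function.Injective (lTensor T j)) :
    Function.Injective (rTensor M i) := by
  rw [injective_iff_map_eq_zero]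
  intro x hx
  obtain ⟨y, rfl⟩ := lTensor_surjective K hp x
  -- push to F ⊗ M
  have h1 : lTensor F p (rTensor G i y) = 0 := by
    have e1 : (p.lTensor F).comp (i.rTensor G) = TensorProduct.map i p :=
      lTensor_comp_rTensor (f := i) (g := p)
    have e2 : (i.rTensor M).comp (p.lTensor K) = TensorProduct.map i p :=
      rTensor_comp_lTensor (f := i) (g := p)
    calc lTensor F p (rTensor G i y) = TensorProduct.map i p y := by
          rw [← e1]; rfl
      _ = rTensor M i (lTensor K p y) := by rw [← e2]; rfl
      _ = 0 := hx
  -- lift to F ⊗ S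
  obtain ⟨z, hz⟩ := (lTensor_exact F hjp hp (rTensor G i y)).mp h1
  -- push to T ⊗ S and use the hypothesis
  have h2 : rTensor S q z = 0 := by
    apply hTj
    rw [map_zero]
    have e1 : (j.lTensor T).comp (q.rTensor S) = TensorProduct.map q j :=
      lTensor_comp_rTensor (f := q) (g := j)
    have e2 : (q.rTensor G).comp (j.lTensor F) = TensorProduct.map q j :=
      rTensor_comp_lTensor (f := q) (g := j)
    have hqi : q ∘ₗ i = 0 := by
      ext k; exact hiq.apply_apply_eq_zero k
    calc lTensor T j (rTensor S q z) = TensorProduct.map q j z := by rw [← e1]; rfl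
      _ = rTensor G q (lTensor F j z) := by rw [← e2]; rfl
      _ = rTensor G q (rTensor G i y) := by rw [hz]
      _ = rTensor G (q ∘ₗ i) y := by rw [rTensor_comp]; rfl
      _ = 0 := by rw [hqi, rTensor_zero, LinearMap.zero_apply]
  -- lift to K ⊗ S
  obtain ⟨w, hw⟩ := (rTensor_exact S hiq hq z).mp h2
  -- conclude y = (1 ⊗ j) w by flatness of G
  have hinj : Function.Injective (rTensor G i) := by
    exact Module.Flat.rTensor_preserves_injective_linearMap i hi
  have h3 : y = lTensor K j w := by
    apply hinj
    have e1 : (j.lTensor F).comp (i.rTensor S) = TensorProduct.map i j :=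
      lTensor_comp_rTensor (f := i) (g := j)
    have e2 : (i.rTensor G).comp (j.lTensor K) = TensorProduct.map i j :=
      rTensor_comp_lTensor (f := i) (g := j)
    calc rTensor G i y = lTensor F j z := hz.symm
      _ = lTensor F j (rTensor S i w) := by rw [hw]
      _ = TensorProduct.map i j w := by rw [← e1]; rfl
      _ = rTensor G i (lTensor K j w) := by rw [← e2]; rfl
  have hpj : p ∘ₗ j = 0 := by
    ext s; exact hjp.apply_apply_eq_zero s
  rw [h3, ← LinearMap.comp_apply, ← lTensor_comp, hpj, lTensor_zero, LinearMap.zero_apply]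

end Aux

/-- Over an NP-ring, if `M` is φ-flat then for every injective module `E`,
`Hom_R(M,E)` is nonnil-injective. -/
theorem stmt_5 (R : Type u) [CommRing R] (hNP : (nilradical R).IsPrime)
    (M : Type u) [AddCommGroup M] [Module R M]
    (hM : ∀ T : ModuleCat.{u} R, IsPhiTorsion R T →
      Subsingleton (((Tor (ModuleCat.{u} R) 1).obj T).obj (ModuleCat.of R M))) :
    ∀ (E : Type u) [AddCommGroup E] [Module R E], Module.Injective R E →
      ∀ T : ModuleCat.{u} R, IsPhiTorsion R T →
        Subsingleton (((Ext R (ModuleCat.{u} R) 1).obj (Opposite.op T)).obj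
          (ModuleCat.of R (M →ₗ[R] E))) := by
  intro E _ _ hE T hT
  classical
  obtain ⟨Q⟩ : Nonempty (ProjectiveResolution (ModuleCat.of R M)) := HasProjectiveResolution.out
  obtain ⟨P⟩ : Nonempty (ProjectiveResolution T) := HasProjectiveResolution.out
  set N : ModuleCat.{u} R := ModuleCat.of R (M →ₗ[R] E) with hN
  -- ### Tor side: extract concrete exactness
  let TorF : ModuleCat.{u} R ⥤ ModuleCat.{u} R :=
    (MonoidalCategory.tensoringLeft (ModuleCat.{u} R)).obj T
  have hTor : Subsingleton ((TorF.leftDerived 1).obj (ModuleCat.of R M)) := hM T hT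
  let TQ := (TorF.mapHomologicalComplex _).obj Q.complex
  have hTQex : TQ.ExactAt 1 := by
    rw [HomologicalComplex.exactAt_iff_isZero_homology]
    haveI : Subsingleton (TQ.homology 1) := by
      haveI := hTor
      exact subsingleton_of_iso (Q.isoLeftDerivedObj TorF 1)
    exact ModuleCat.isZero_of_subsingleton _
  have hTQex' := (HomologicalComplex.exactAt_iff' TQ 2 1 0 (by simp) (by simp)).1 hTQex
  have hexactT := (ShortComplex.moduleCat_exact_iff _).1 hTQex'
  -- underlying linear maps of the resolution of M
  let d21Q : ↥(Q.complex.X 2) →ₗ[R] ↥(Q.complex.X 1) := (Q.complex.d 2 1).hom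
  let d10Q : ↥(Q.complex.X 1) →ₗ[R] ↥(Q.complex.X 0) := (Q.complex.d 1 0).hom
  have hexact2 : ∀ u : TensorProduct R (↥T) (↥(Q.complex.X 1)), LinearMap.lTensor (↥T) d10Q u = 0 →
      ∃ v : TensorProduct R (↥T) (↥(Q.complex.X 2)), LinearMap.lTensor (↥T) d21Q v = u :=
    fun u hu => hexactT u hu
  have hdQ : ∀ x, d10Q (d21Q x) = 0 := by
    intro x
    exact LinearMap.congr_fun (congrArg ModuleCat.Hom.hom (Q.complex.d_comp_d 2 1 0)) x
  have hA : Function.Injective (LinearMap.lTensor (↥T) (LinearMap.range d10Q).subtype) :=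
    aux_lTensor_subtype_injective d21Q d10Q hdQ hexact2
  -- ### the two presentations
  let d10P : ↥(P.complex.X 1) →ₗ[R] ↥(P.complex.X 0) := (P.complex.d 1 0).hom
  let K : Submodule R ↥(P.complex.X 0) := LinearMap.range d10P
  let i : ↥K →ₗ[R] ↥(P.complex.X 0) := K.subtype
  let q : ↥(P.complex.X 0) →ₗ[R] ↥T := (P.π.f 0).hom
  have hq : Function.Surjective q := (ModuleCat.epi_iff_surjective (P.π.f 0)).1 inferInstance
  have hkerP : LinearMap.range d10P = LinearMap.ker q :=
    (ShortComplex.moduleCat_exact_iff_range_eq_ker _).1 P.exact₀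
  have hiq : Function.Exact i q := by
    intro y
    constructor
    · intro hy
      refine ⟨⟨y, ?_⟩, rfl⟩
      show y ∈ LinearMap.range d10P
      rw [hkerP]
      exact LinearMap.mem_ker.mpr hy
    · rintro ⟨⟨a, ha⟩, rfl⟩
      have ha' : a ∈ LinearMap.ker q := by
        rw [← hkerP]; exact ha
      exact ha'
  let S : Submodule R ↥(Q.complex.X 0) := LinearMap.range d10Q
  let j : ↥S →ₗ[R] ↥(Q.complex.X 0) := S.subtype
  let p : ↥(Q.complex.X 0) →ₗ[R] M := (Q.π.f 0).hom
  have hp : Function.Surjective p := (ModuleCat.epi_iff_surjective (Q.π.f 0)).1 inferInstance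
  have hkerQ : LinearMap.range d10Q = LinearMap.ker p :=
    (ShortComplex.moduleCat_exact_iff_range_eq_ker _).1 Q.exact₀
  have hjp : Function.Exact j p := by
    intro y
    constructor
    · intro hy
      refine ⟨⟨y, ?_⟩, rfl⟩
      show y ∈ LinearMap.range d10Q
      rw [hkerQ]
      exact LinearMap.mem_ker.mpr hy
    · rintro ⟨⟨a, ha⟩, rfl⟩
      have ha' : a ∈ LinearMap.ker p := by
        rw [← hkerQ]; exact ha
      exact ha'
  haveI hGproj : Module.Projective R ↥(Q.complex.X 0) := by
    refine (IsProjective.iff_projective _).mpr ?_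
    rw [ModuleCat.of_coe]
    exact Q.projective 0
  haveI hGflat : Module.Flat R ↥(Q.complex.X 0) := inferInstance
  have hinj : Function.Injective (LinearMap.rTensor M i) :=
    key_chase i q j p K.injective_subtype hq hiq hp hjp hA
  -- ### Ext side
  haveI : Subsingleton ((P.complex.linearYonedaObj R N).homology 1) := by
    apply subsingleton_of_isZero
    rw [← HomologicalComplex.exactAt_iff_isZero_homology]
    rw [HomologicalComplex.exactAt_iff' _ 0 1 2 (by simp) (by simp)]
    rw [ShortComplex.moduleCat_exact_iff]
    intro f hf
    let f' : ↥(P.complex.X 1) →ₗ[R] ↥N := f.hom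
    have hf3 : P.complex.d 2 1 ≫ (ModuleCat.ofHom f' : P.complex.X 1 ⟶ N) = 0 := hf
    have hf' : ∀ x : ↥(P.complex.X 2), f' ((P.complex.d 2 1).hom x) = 0 := by
      intro x
      exact LinearMap.congr_fun (congrArg ModuleCat.Hom.hom hf3) x
    have hker : ∀ x : ↥(P.complex.X 1), d10P x = 0 → f' x = 0 := by
      intro x hx
      obtain ⟨y, hy⟩ := (ShortComplex.moduleCat_exact_iff _).1 (P.exact_succ 0) x hx
      have hy' : (P.complex.d 2 1).hom y = x := hy
      rw [← hy']
      exact hf' y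
    have hle : LinearMap.ker d10P ≤ LinearMap.ker f' :=
      fun x hx => hker x hx
    -- factor `f'` through `K`
    let h : ↥K →ₗ[R] ↥N :=
      (Submodule.liftQ (LinearMap.ker d10P) f' hle).comp
        d10P.quotKerEquivRange.symm.toLinearMap
    have hh : ∀ x, h (d10P.rangeRestrict x) = f' x := by
      intro x
      have h1 : d10P.quotKerEquivRange (Submodule.Quotient.mk x) = d10P.rangeRestrict x :=
        Subtype.ext (LinearMap.quotKerEquivRange_apply_mk d10P x)
      have h2 : d10P.quotKerEquivRange.symm (d10P.rangeRestrict x) =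
          Submodule.Quotient.mk x := by
        rw [LinearEquiv.symm_apply_eq]
        exact h1.symm
      show (Submodule.liftQ (LinearMap.ker d10P) f' hle)
        (d10P.quotKerEquivRange.symm (d10P.rangeRestrict x)) = f' x
      rw [h2, Submodule.liftQ_apply]
    -- extend along `K ⊗ M → F ⊗ M` using injectivity of `E`
    obtain ⟨H, hH⟩ := hE.out (LinearMap.rTensor M i) hinj
      (TensorProduct.lift (h : ↥K →ₗ[R] M →ₗ[R] E))
    let g : ↥(P.complex.X 0) →ₗ[R] (M →ₗ[R] E) := TensorProduct.curry H
    let f'' : ↥(P.complex.X 1) →ₗ[R] (M →ₗ[R] E) := f'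
    let h' : ↥K →ₗ[R] (M →ₗ[R] E) := h
    have hh' : ∀ x, h' (d10P.rangeRestrict x) = f'' x := fun x => hh x
    have key : ∀ x : ↥(P.complex.X 1), g (d10P x) = f'' x := by
      intro x
      apply LinearMap.ext
      intro m
      have e1 : d10P x = i (d10P.rangeRestrict x) := rfl
      calc g (d10P x) m = H (TensorProduct.tmul R (d10P x) m) := rfl
        _ = H (LinearMap.rTensor M i (TensorProduct.tmul R (d10P.rangeRestrict x) m)) := by
            rw [LinearMap.rTensor_tmul, ← e1]
        _ = TensorProduct.lift (h : ↥K →ₗ[R] M →ₗ[R] E)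
              (TensorProduct.tmul R (d10P.rangeRestrict x) m) := hH _
        _ = h' (d10P.rangeRestrict x) m := rfl
        _ = f'' x m := by rw [hh']
    refine ⟨ModuleCat.ofHom g, ?_⟩
    show (P.complex.d 1 0 ≫ (ModuleCat.ofHom g : P.complex.X 0 ⟶ N) : P.complex.X 1 ⟶ N) = f
    apply ModuleCat.hom_ext
    apply LinearMap.ext
    intro x
    exact key x
  exact subsingleton_of_iso (P.isoExt 1 N).symm
end

section
/- Let R be a φ-ring and I a nonnil ideal of R. Then I·Nil(R) = Nil(R), and consequently I ⊗_R (R/Nil(R)) ≅ I/Nil(R) as R/Nil(R)-modules. -/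
open TensorProduct

/-- In a φ-ring, for a nonnil ideal `I`, `I · Nil(R) = Nil(R)` and
`I ⊗_R (R/Nil(R)) ≅ I/Nil(R)`. -/
theorem stmt_6 (R : Type u) [CommRing R]
    (hp : (nilradical R).IsPrime)
    (hdiv : ∀ x ∉ nilradical R, nilradical R < Ideal.span {x})
    (I : Ideal R) (hI : ¬ I ≤ nilradical R) :
    I * nilradical R = nilradical R ∧
      Nonempty ((I ⊗[R] (R ⧸ nilradical R)) ≃ₗ[R]
        (I ⧸ (Submodule.comap I.subtype (nilradical R)))) := by
  obtain ⟨x, hxI, hxn⟩ := SetLike.not_le_iff_exists.mp hI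
  have hmul : I * nilradical R = nilradical R := by
    apply le_antisymm Ideal.mul_le_right
    intro n hn
    have hle : nilradical R ≤ Ideal.span {x} := (hdiv x hxn).le
    obtain ⟨r, hr⟩ := Ideal.mem_span_singleton'.mp (hle hn)
    have hrn : r ∈ nilradical R := by
      by_contra hrn
      exact hrn (by
        rcases (hp.mem_or_mem (show r * x ∈ nilradical R by rwa [hr])) with h | h
        · exact absurd h hrn
        · exact absurd h hxn)
    rw [← hr, mul_comm r x]
    exact Ideal.mul_mem_mul hxI hrn
  refine ⟨hmul, ?_⟩
  have hsm : (nilradical R • ⊤ : Submodule R I) =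
      Submodule.comap I.subtype (nilradical R) := by
    apply Submodule.map_injective_of_injective I.injective_subtype
    rw [Submodule.map_smul'', Submodule.map_top, Submodule.range_subtype,
      Submodule.map_comap_eq, Submodule.range_subtype]
    have h1 : nilradical R • I = nilradical R * I := rfl
    rw [h1, mul_comm, hmul]
    exact (inf_eq_right.mpr (hmul ▸ Ideal.mul_le_left)).symm
  exact ⟨(tensorQuotEquivQuotSMul I (nilradical R)).trans
    (Submodule.quotEquivOfEq _ _ hsm)⟩
end

section
/- Let R be a φ-ring and E an R/Nil(R)-module, viewed as an R-module via the quotient map. Then E is an injective R/Nil(R)-module if and only if E is a nonnil-injective R-module. -/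
open CategoryTheory

section NonnilExtAux

open Limits

universe u

variable {R : Type u} [CommRing R]

noncomputable def res0 (I : Ideal R) : ModuleCat.of R R ⟶ ModuleCat.of R (R ⧸ I) :=
  ModuleCat.ofHom I.mkQ

instance (I : Ideal R) : Epi (res0 I) := by
  rw [ModuleCat.epi_iff_surjective]
  exact Submodule.mkQ_surjective I

instance : Projective (ModuleCat.of R R) :=
  (IsProjective.iff_projective R).1 inferInstance

noncomputable def resComplex (I : Ideal R) : ChainComplex (ModuleCat R) ℕ :=
  ChainComplex.mk' (ModuleCat.of R R) (Projective.syzygies (res0 I)) (Projective.d (res0 I))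
    (fun f => ⟨_, Projective.d f, by simp only [Projective.d]; exact (Category.assoc _ _ _).trans ((congrArg (fun g => Projective.π (kernel f) ≫ g) (kernel.condition f)).trans comp_zero)⟩)

lemma resComplex_d_1_0 (I : Ideal R) :
    (resComplex I).d 1 0 = Projective.d (res0 I) := by
  simp [resComplex]

lemma resComplex_exactAt_succ (I : Ideal R) (n : ℕ) :
    (resComplex I).ExactAt (n + 1) := by
  rw [HomologicalComplex.exactAt_iff' _ (n + 1 + 1) (n + 1) n (by simp) (by simp)]
  dsimp [resComplex, HomologicalComplex.sc', HomologicalComplex.shortComplexFunctor',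
      ChainComplex.mk', ChainComplex.mk]
  simp only [ChainComplex.of.d, dif_pos, eqToHom_refl, Category.id_comp]
  match n with
  | 0 => apply CategoryTheory.exact_d_f
  | n + 1 => apply CategoryTheory.exact_d_f

instance resComplex_projective (I : Ideal R) (n : ℕ) : Projective ((resComplex I).X n) := by
  obtain (_ | _ | _ | n) := n
  · exact (IsProjective.iff_projective R).1 inferInstance
  · apply Projective.projective_over
  · apply Projective.projective_over
  · apply Projective.projective_over

noncomputable def resolution (I : Ideal R) : ProjectiveResolution (ModuleCat.of R (R ⧸ I)) where
  complex := resComplex I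
  π := (ChainComplex.toSingle₀Equiv _ _).symm ⟨res0 I, by
          rw [resComplex_d_1_0]; simp only [Projective.d]; exact (Category.assoc _ _ _).trans ((congrArg (fun g => Projective.π (kernel (res0 I)) ≫ g) (kernel.condition (res0 I))).trans comp_zero)⟩
  quasiIso := ⟨fun n => by
    cases n
    · rw [ChainComplex.quasiIsoAt₀_iff, ShortComplex.quasiIso_iff_of_zeros']
      · refine (ShortComplex.exact_and_epi_g_iff_of_iso ?_).2
          ⟨CategoryTheory.exact_d_f (res0 I), by dsimp; infer_instance⟩
        exact ShortComplex.isoMk (Iso.refl _) (Iso.refl _) (Iso.refl _)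
          (by simp only [Category.id_comp, Category.comp_id]; rfl) (by simp only [Category.id_comp, Category.comp_id]; rfl)
      all_goals rfl
    · rw [quasiIsoAt_iff_exactAt']
      · apply resComplex_exactAt_succ
      · apply ChainComplex.exactAt_succ_single_obj⟩

lemma resolution_π_f_0 (I : Ideal R) : (resolution I).π.f 0 = res0 I :=
  ChainComplex.toSingle₀Equiv_symm_apply_f_zero _ _

lemma resolution_range_d_1_0 (I : Ideal R) :
    LinearMap.range (((resolution I).complex.d 1 0).hom : _ →ₗ[R] R) = I := by
  have h := (resolution I).exact₀
  rw [ShortComplex.moduleCat_exact_iff_range_eq_ker] at h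
  have h2 : LinearMap.range (((resolution I).complex.d 1 0).hom : _ →ₗ[R] R) =
      LinearMap.ker ((resolution I).π.f 0).hom := h
  rw [resolution_π_f_0] at h2
  exact h2.trans (Submodule.ker_mkQ I)

lemma resolution_exact1 (I : Ideal R) :
    LinearMap.range ((resolution I).complex.d 2 1).hom =
      LinearMap.ker ((resolution I).complex.d 1 0).hom := by
  have h := (resolution I).exact_succ 0
  rwa [ShortComplex.moduleCat_exact_iff_range_eq_ker] at h

lemma NonnilExt.ext_one_subsingleton_iff_baer (I : Ideal R) (E : Type u) [AddCommGroup E] [Module R E] :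
    Subsingleton (((Ext R (ModuleCat.{u} R) 1).obj
        (Opposite.op (ModuleCat.of R (R ⧸ I)))).obj (ModuleCat.of R E)) ↔
    ∀ f : I →ₗ[R] E, ∃ h : R →ₗ[R] E, ∀ (x : R) (hx : x ∈ I), h x = f ⟨x, hx⟩ := by
  classical
  set P := resolution (R := R) I with hP
  set C := P.complex.linearYonedaObj R (ModuleCat.of R E) with hC
  have e := P.isoExt (R := R) 1 (ModuleCat.of R E)
  have hzs : ∀ (M : ModuleCat.{u} R), IsZero M ↔ Subsingleton M := by
    intro M
    constructor
    · intro hz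
      have h1 : (𝟙 M : M ⟶ M).hom = 0 := congrArg ModuleCat.Hom.hom (hz.eq_of_src _ _)
      refine ⟨fun a b => ?_⟩
      have ha : a = (𝟙 M : M ⟶ M).hom a := rfl
      have hb : b = (𝟙 M : M ⟶ M).hom b := rfl
      rw [ha, hb, h1]
      rfl
    · intro _
      exact ModuleCat.isZero_of_subsingleton _
  have step1 : Subsingleton (((Ext R (ModuleCat.{u} R) 1).obj
        (Opposite.op (ModuleCat.of R (R ⧸ I)))).obj (ModuleCat.of R E)) ↔
      C.ExactAt 1 := by
    rw [HomologicalComplex.exactAt_iff_isZero_homology, hzs]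
    exact e.toLinearEquiv.toEquiv.subsingleton_congr
  rw [step1]
  have key : C.ExactAt 1 ↔ (∀ (x₂ : P.complex.X 1 ⟶ ModuleCat.of R E),
      P.complex.d 2 1 ≫ x₂ = 0 → ∃ (x₁ : P.complex.X 0 ⟶ ModuleCat.of R E),
        P.complex.d 1 0 ≫ x₁ = x₂) := by
    rw [HomologicalComplex.exactAt_iff' C 0 1 2 (by simp) (by simp),
      ShortComplex.moduleCat_exact_iff]
    constructor
    · intro H x hx
      exact H x hx
    · intro H x hx
      exact H x hx
  rw [key]
  set D10 : ((P.complex.X 1 : ModuleCat R) : Type u) →ₗ[R] R := (P.complex.d 1 0).hom with hD10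
  have hmem : ∀ y, D10 y ∈ I := fun y => by
    have : D10 y ∈ LinearMap.range D10 := LinearMap.mem_range_self _ y
    exact (SetLike.ext_iff.mp (resolution_range_d_1_0 I) _).mp this
  have hdd : ∀ z, D10 (P.complex.d 2 1 z) = 0 := fun z => by
    have h0 : P.complex.d 2 1 ≫ P.complex.d 1 0 = 0 := P.complex.d_comp_d 2 1 0
    exact LinearMap.congr_fun (congrArg ModuleCat.Hom.hom h0) z
  constructor
  · intro hex f
    set c : ((P.complex.X 1 : ModuleCat R) : Type u) →ₗ[R] E :=
      f.comp (LinearMap.codRestrict I D10 hmem) with hc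
    have hcycle : P.complex.d 2 1 ≫ (ModuleCat.ofHom c) = 0 := by
      apply ModuleCat.hom_ext
      apply LinearMap.ext
      intro z
      show c (P.complex.d 2 1 z) = 0
      rw [hc]
      show f ⟨D10 (P.complex.d 2 1 z), _⟩ = 0
      have h0 : (⟨D10 (P.complex.d 2 1 z), hmem _⟩ : I) = 0 := Subtype.ext (hdd z)
      rw [h0, map_zero]
    obtain ⟨h, hh⟩ := hex (ModuleCat.ofHom c) hcycle
    refine ⟨(show R →ₗ[R] E from h.hom), fun x hx => ?_⟩
    have hx' : x ∈ LinearMap.range D10 := (SetLike.ext_iff.mp (resolution_range_d_1_0 I) x).mpr hx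
    obtain ⟨y, hy⟩ := hx'
    have h1 : (show R →ₗ[R] E from h.hom) (D10 y) = c y := LinearMap.congr_fun (congrArg ModuleCat.Hom.hom hh) y
    have h2 : c y = f ⟨D10 y, hmem y⟩ := rfl
    calc (show R →ₗ[R] E from h.hom) x = (show R →ₗ[R] E from h.hom) (D10 y) := by rw [hy]
      _ = f ⟨D10 y, hmem y⟩ := h1.trans h2
      _ = f ⟨x, hx⟩ := by congr 1; exact Subtype.ext hy
  · intro hb g hg
    have hker : LinearMap.ker D10 ≤ LinearMap.ker g.hom := by
      intro y hy
      replace hy := (SetLike.ext_iff.mp (resolution_exact1 I) y).mpr hy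
      obtain ⟨z, rfl⟩ := hy
      exact LinearMap.congr_fun (congrArg ModuleCat.Hom.hom hg) z
    set q := Submodule.liftQ (LinearMap.ker D10) g.hom hker with hq
    set eIso := (D10.quotKerEquivRange).trans
      (LinearEquiv.ofEq (LinearMap.range D10) I (by rw [hD10]; exact resolution_range_d_1_0 I)) with heIso
    set f : (I : Submodule R R) →ₗ[R] E := q.comp eIso.symm.toLinearMap with hf
    obtain ⟨h, hh⟩ := hb f
    refine ⟨ModuleCat.ofHom (show R →ₗ[R] E from h), ?_⟩
    apply ModuleCat.hom_ext
    apply LinearMap.ext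
    intro y
    have key2 : eIso (Submodule.Quotient.mk y) = ⟨D10 y, hmem y⟩ := by
      apply Subtype.ext
      simp only [heIso, LinearEquiv.trans_apply, LinearEquiv.coe_ofEq_apply]
      exact D10.quotKerEquivRange_apply_mk y
    show (show R →ₗ[R] E from h) (D10 y) = g.hom y
    calc (show R →ₗ[R] E from h) (D10 y) = f ⟨D10 y, hmem y⟩ := hh _ _
      _ = q (eIso.symm ⟨D10 y, hmem y⟩) := rfl
      _ = q (Submodule.Quotient.mk y) := by rw [← key2, LinearEquiv.symm_apply_apply]
      _ = g y := Submodule.liftQ_apply _ _ _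

end NonnilExtAux

/-- Let `R` be a φ-ring and `E` an `R/Nil(R)`-module, viewed as an
`R`-module (compatibly, via the quotient map). Then `E` is injective over `R/Nil(R)`
iff `E` is nonnil-injective over `R`, i.e. `Ext¹_R(R/I, E) = 0` for every nonnil ideal `I`. -/
theorem stmt_7 (R : Type u) [CommRing R]
    (hp : (nilradical R).IsPrime)
    (hdiv : ∀ x ∉ nilradical R, nilradical R < Ideal.span {x})
    (E : Type u) [AddCommGroup E] [Module R E] [Module (R ⧸ nilradical R) E]
    [IsScalarTower R (R ⧸ nilradical R) E] :
    Module.Injective (R ⧸ nilradical R) E ↔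
      (∀ I : Ideal R, ¬ I ≤ nilradical R →
        Subsingleton (((Ext R (ModuleCat.{u} R) 1).obj
          (Opposite.op (ModuleCat.of R (R ⧸ I)))).obj (ModuleCat.of R E))) := by
  classical
  have hscal : ∀ (r : R) (x : E), r • x = (Ideal.Quotient.mk (nilradical R) r) • x := by
    intro r x
    rw [algebra_compatible_smul (R ⧸ nilradical R) r x, Ideal.Quotient.algebraMap_eq]
  rw [← Module.Baer.iff_injective]
  constructor
  · -- Baer over R̄ ⇒ nonnil-Ext vanishing
    intro hBaer I hI
    rw [NonnilExt.ext_one_subsingleton_iff_baer]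
    intro f
    obtain ⟨x₀, hx₀I, hx₀⟩ := SetLike.not_le_iff_exists.mp hI
    have hNilI : nilradical R ≤ I :=
      (hdiv x₀ hx₀).le.trans (by rwa [Ideal.span_le, Set.singleton_subset_iff])
    have fNil : ∀ (n : R) (hn : n ∈ nilradical R) (hn' : n ∈ I), f ⟨n, hn'⟩ = 0 := by
      intro n hn hn'
      obtain ⟨a, ha_eq⟩ := Ideal.mem_span_singleton'.mp ((hdiv x₀ hx₀).le hn)
      have ha : a ∈ nilradical R := by
        rcases hp.mem_or_mem (ha_eq ▸ hn) with h | h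
        · exact h
        · exact absurd h hx₀
      have heq : (⟨n, hn'⟩ : I) = a • ⟨x₀, hx₀I⟩ := Subtype.ext (by simp [← ha_eq, smul_eq_mul])
      rw [heq, map_smul, hscal a _, Ideal.Quotient.eq_zero_iff_mem.mpr ha, zero_smul]
    have wd : ∀ (x y : R) (hx : x ∈ I) (hy : y ∈ I),
        Ideal.Quotient.mk (nilradical R) x = Ideal.Quotient.mk (nilradical R) y →
        f ⟨x, hx⟩ = f ⟨y, hy⟩ := by
      intro x y hx hy hxy
      have hsub : x - y ∈ nilradical R := Ideal.Quotient.eq.mp hxy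
      have h0 : f ⟨x - y, sub_mem hx hy⟩ = 0 := fNil _ hsub _
      have h1 : (⟨x - y, sub_mem hx hy⟩ : I) = ⟨x, hx⟩ - ⟨y, hy⟩ := Subtype.ext rfl
      rw [h1, map_sub] at h0
      exact sub_eq_zero.mp h0
    set J : Ideal (R ⧸ nilradical R) := I.map (Ideal.Quotient.mk (nilradical R)) with hJ
    have repr : ∀ z : J, ∃ y, y ∈ I ∧ Ideal.Quotient.mk (nilradical R) y = (z : R ⧸ nilradical R) := by
      intro z
      exact (Ideal.mem_map_iff_of_surjective _ Ideal.Quotient.mk_surjective).mp z.2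
    choose sec hsecI hsec using repr
    have indep : ∀ (z : J) (x : R) (hx : x ∈ I),
        Ideal.Quotient.mk (nilradical R) x = (z : R ⧸ nilradical R) →
        f ⟨sec z, hsecI z⟩ = f ⟨x, hx⟩ := by
      intro z x hx hxz
      exact wd _ _ _ _ ((hsec z).trans hxz.symm)
    set f0 : J → E := fun z => f ⟨sec z, hsecI z⟩ with hf0
    have fbar_add : ∀ z w : J, f0 (z + w) = f0 z + f0 w := by
      intro z w
      have hmk : Ideal.Quotient.mk (nilradical R) (sec z + sec w) = ((z + w : J) : R ⧸ nilradical R) := by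
        rw [map_add, hsec z, hsec w]; rfl
      calc f0 (z + w) = f ⟨sec (z + w), hsecI _⟩ := rfl
        _ = f ⟨sec z + sec w, add_mem (hsecI z) (hsecI w)⟩ :=
            indep (z + w) (sec z + sec w) (add_mem (hsecI z) (hsecI w)) hmk
        _ = f (⟨sec z, hsecI z⟩ + ⟨sec w, hsecI w⟩) := by congr 1
        _ = f0 z + f0 w := map_add f _ _
    have fbar_smul : ∀ (c : R ⧸ nilradical R) (z : J), f0 (c • z) = c • f0 z := by
      intro c z
      obtain ⟨r, rfl⟩ := Ideal.Quotient.mk_surjective c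
      have hmem : r * sec z ∈ I := I.mul_mem_left r (hsecI z)
      have hmk : Ideal.Quotient.mk (nilradical R) (r * sec z) =
          ((Ideal.Quotient.mk (nilradical R) r • z : J) : R ⧸ nilradical R) := by
        rw [map_mul, hsec z]; rfl
      calc f0 (Ideal.Quotient.mk (nilradical R) r • z)
          = f ⟨sec _, hsecI _⟩ := rfl
        _ = f ⟨r * sec z, hmem⟩ := indep _ (r * sec z) hmem hmk
        _ = f (r • ⟨sec z, hsecI z⟩) := by congr 1
        _ = r • f ⟨sec z, hsecI z⟩ := map_smul f r _
        _ = Ideal.Quotient.mk (nilradical R) r • f0 z := hscal r _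
    set fbar : J →ₗ[R ⧸ nilradical R] E :=
      { toFun := f0
        map_add' := fbar_add
        map_smul' := fbar_smul } with hfbar
    obtain ⟨g', hg'⟩ := hBaer J fbar
    refine ⟨(g'.restrictScalars R).comp (Algebra.linearMap R (R ⧸ nilradical R)), fun x hx => ?_⟩
    have hmemJ : Ideal.Quotient.mk (nilradical R) x ∈ J := Ideal.mem_map_of_mem _ hx
    have : (g'.restrictScalars R).comp (Algebra.linearMap R (R ⧸ nilradical R)) x =
        g' (Ideal.Quotient.mk (nilradical R) x) := by
      simp [Ideal.Quotient.algebraMap_eq]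
    rw [this, hg' _ hmemJ]
    exact indep ⟨_, hmemJ⟩ x hx rfl
  · -- nonnil-Ext vanishing ⇒ Baer over R̄
    intro hext
    have hext' : ∀ I : Ideal R, ¬ I ≤ nilradical R →
        ∀ f : I →ₗ[R] E, ∃ h : R →ₗ[R] E, ∀ (x : R) (hx : x ∈ I), h x = f ⟨x, hx⟩ :=
      fun I hI => (NonnilExt.ext_one_subsingleton_iff_baer I E).mp (hext I hI)
    intro J g
    by_cases hJ : J = ⊥
    · refine ⟨0, fun x hx => ?_⟩
      have hx0 : x = 0 := by rw [hJ] at hx; exact (Submodule.mem_bot _).mp hx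
      have h00 : (⟨x, hx⟩ : J) = 0 := Subtype.ext hx0
      rw [h00, map_zero]
      rfl
    · set I : Ideal R := J.comap (Ideal.Quotient.mk (nilradical R)) with hI
      have hNilI : nilradical R ≤ I := by
        intro n hn
        show Ideal.Quotient.mk (nilradical R) n ∈ J
        rw [Ideal.Quotient.eq_zero_iff_mem.mpr hn]
        exact J.zero_mem
      have hInonnil : ¬ I ≤ nilradical R := by
        intro hle
        apply hJ
        rw [Submodule.eq_bot_iff]
        intro x hx
        obtain ⟨r, rfl⟩ := Ideal.Quotient.mk_surjective x
        have : r ∈ I := hx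
        exact Ideal.Quotient.eq_zero_iff_mem.mpr (hle this)
      have memJ : ∀ x : I, Ideal.Quotient.mk (nilradical R) (x : R) ∈ J := fun x => x.2
      set f0 : I → E := fun x => g ⟨Ideal.Quotient.mk (nilradical R) (x : R), memJ x⟩ with hf0
      have f0_add : ∀ a b : I, f0 (a + b) = f0 a + f0 b := by
        intro a b
        have h1 : (⟨Ideal.Quotient.mk (nilradical R) ((a + b : I) : R), memJ _⟩ : J) =
            ⟨Ideal.Quotient.mk (nilradical R) (a : R), memJ a⟩ +
            ⟨Ideal.Quotient.mk (nilradical R) (b : R), memJ b⟩ := by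
          apply Subtype.ext
          show Ideal.Quotient.mk (nilradical R) ((a : R) + (b : R)) = _
          rw [map_add]; rfl
        calc f0 (a + b) = g ⟨Ideal.Quotient.mk (nilradical R) ((a + b : I) : R), memJ _⟩ := rfl
          _ = g (⟨Ideal.Quotient.mk (nilradical R) (a : R), memJ a⟩ +
                ⟨Ideal.Quotient.mk (nilradical R) (b : R), memJ b⟩) := by rw [h1]
          _ = f0 a + f0 b := map_add g _ _
      have f0_smul : ∀ (r : R) (a : I), f0 (r • a) = r • f0 a := by
        intro r a
        have h1 : (⟨Ideal.Quotient.mk (nilradical R) ((r • a : I) : R), memJ _⟩ : J) =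
            Ideal.Quotient.mk (nilradical R) r •
              ⟨Ideal.Quotient.mk (nilradical R) (a : R), memJ a⟩ := by
          apply Subtype.ext
          show Ideal.Quotient.mk (nilradical R) (r * (a : R)) = _
          rw [map_mul]; rfl
        calc f0 (r • a) = g ⟨Ideal.Quotient.mk (nilradical R) ((r • a : I) : R), memJ _⟩ := rfl
          _ = g (Ideal.Quotient.mk (nilradical R) r •
                ⟨Ideal.Quotient.mk (nilradical R) (a : R), memJ a⟩) := by rw [h1]
          _ = Ideal.Quotient.mk (nilradical R) r • f0 a := map_smul g _ _
          _ = r • f0 a := (hscal r _).symm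
      set f : I →ₗ[R] E :=
        { toFun := f0
          map_add' := f0_add
          map_smul' := f0_smul } with hf
      obtain ⟨h0, hh0⟩ := hext' I hInonnil f
      have hker : nilradical R ≤ LinearMap.ker h0 := by
        intro n hn
        have hnI : n ∈ I := hNilI hn
        have h1 : h0 n = g ⟨Ideal.Quotient.mk (nilradical R) n, hnI⟩ := hh0 n hnI
        have h2 : (⟨Ideal.Quotient.mk (nilradical R) n, hnI⟩ : J) = 0 :=
          Subtype.ext (Ideal.Quotient.eq_zero_iff_mem.mpr hn)
        rw [LinearMap.mem_ker, h1, h2, map_zero]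
      set h1 : (R ⧸ nilradical R) →ₗ[R] E := Submodule.liftQ (nilradical R) h0 hker with hh1
      set h : (R ⧸ nilradical R) →ₗ[R ⧸ nilradical R] E :=
        { toFun := h1
          map_add' := map_add h1
          map_smul' := by
            intro c x
            obtain ⟨r, rfl⟩ := Ideal.Quotient.mk_surjective c
            simp only [RingHom.id_apply]
            rw [show Ideal.Quotient.mk (nilradical R) r • x = r • x from by
              rw [← Ideal.Quotient.algebraMap_eq, algebraMap_smul], map_smul, hscal] } with hh
      refine ⟨h, fun x hx => ?_⟩
      obtain ⟨r, rfl⟩ := Ideal.Quotient.mk_surjective x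
      have hrI : r ∈ I := hx
      show h1 (Submodule.Quotient.mk r) = g _
      rw [hh1, Submodule.liftQ_apply, hh0 r hrI]
      rfl
end

section
/- Let R be a φ-ring and M an R/Nil(R)-module that is FP-injective over R/Nil(R). Then M, viewed as an R-module, is nonnil-FP-injective over R. -/
open CategoryTheory

universe u

open CategoryTheory.Limits

section PhiAuxSection



namespace PhiAux

variable {C : Type*} [Category C] [Abelian C] [EnoughProjectives C]
variable {Z P : C} (π : P ⟶ Z) [Projective P] [Epi π]

/-- Projective resolution complex starting from a chosen epimorphism `π : P ⟶ Z`. -/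
noncomputable def ofComplex' : ChainComplex C ℕ :=
  ChainComplex.mk' P (Projective.syzygies π) (Projective.d π)
    (fun f => ⟨_, Projective.d f, by erw [Category.assoc, kernel.condition, comp_zero]⟩)

lemma ofComplex'_d_1_0 : (ofComplex' π).d 1 0 = Projective.d π := by
  simp [ofComplex']

lemma ofComplex'_exactAt_succ (n : ℕ) :
    (ofComplex' π).ExactAt (n + 1) := by
  rw [HomologicalComplex.exactAt_iff' _ (n + 1 + 1) (n + 1) n (by simp) (by simp)]
  have e := exact_d_f ((ofComplex' π).d (n + 1) n)
  unfold ofComplex' at e ⊢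
  refine ShortComplex.exact_of_iso ?_ e
  refine ShortComplex.isoMk (ChainComplex.mk'XIso P (Projective.syzygies π) (Projective.d π)
    (fun f => ⟨_, Projective.d f, by erw [Category.assoc, kernel.condition, comp_zero]⟩) n).symm (Iso.refl _) (Iso.refl _) ?_ ?_
  · erw [Iso.refl_hom, Category.comp_id, Iso.symm_hom, Iso.inv_comp_eq]
    exact ChainComplex.mk'_d P (Projective.syzygies π) (Projective.d π)
      (fun f => ⟨_, Projective.d f, by erw [Category.assoc, kernel.condition, comp_zero]⟩) n
  · erw [Iso.refl_hom, Iso.refl_hom, Category.id_comp, Category.comp_id]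
    rfl

instance (n : ℕ) : Projective ((ofComplex' π).X n) := by
  obtain (_ | _ | _ | n) := n
  · exact ‹Projective P›
  all_goals apply Projective.projective_over

/-- A projective resolution of `Z` starting from a chosen epimorphism `π : P ⟶ Z`. -/
noncomputable def resOf : ProjectiveResolution Z where
  complex := ofComplex' π
  π := (ChainComplex.toSingle₀Equiv _ _).symm ⟨π, by
          rw [ofComplex'_d_1_0]; erw [Category.assoc, kernel.condition, comp_zero]⟩
  quasiIso := ⟨fun n => by
    cases n
    · rw [ChainComplex.quasiIsoAt₀_iff, ShortComplex.quasiIso_iff_of_zeros']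
      · refine (ShortComplex.exact_and_epi_g_iff_of_iso ?_).2
          ⟨exact_d_f π, by dsimp; infer_instance⟩
        exact ShortComplex.isoMk (Iso.refl _) (Iso.refl _) (Iso.refl _)
          (by erw [Category.id_comp, Category.comp_id]; exact (ofComplex'_d_1_0 π).symm) (by erw [Category.id_comp, Category.comp_id]; exact (ChainComplex.toSingle₀Equiv_symm_apply_f_zero (C := ofComplex' π) π _).symm)
      all_goals rfl
    · rw [quasiIsoAt_iff_exactAt']
      · apply ofComplex'_exactAt_succ
      · apply ChainComplex.exactAt_succ_single_obj⟩

end PhiAux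



theorem phi_exists_factor {S A B D : Type*} [Ring S] [AddCommGroup A] [Module S A]
    [AddCommGroup B] [Module S B] [AddCommGroup D] [Module S D]
    (u : A →ₗ[S] B) (v : A →ₗ[S] D) (hu : Function.Surjective u)
    (h : ∀ a, u a = 0 → v a = 0) :
    ∃ w : B →ₗ[S] D, ∀ a, w (u a) = v a := by
  have hle : LinearMap.ker u ≤ LinearMap.ker v := fun a ha => h a ha
  refine ⟨(Submodule.liftQ (LinearMap.ker u) v hle).comp
    (u.quotKerEquivOfSurjective hu).symm.toLinearMap, fun a => ?_⟩
  have h1 : (u.quotKerEquivOfSurjective hu).symm (u a) = Submodule.Quotient.mk a := by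
    apply (u.quotKerEquivOfSurjective hu).injective
    simp only [LinearEquiv.apply_symm_apply]
    exact (LinearMap.quotKerEquivRange_apply_mk u a).symm
  simp [h1]

theorem phi_subsingleton_of_isZero {S : Type u} [Ring S] {X : ModuleCat.{u} S}
    (h : IsZero X) : Subsingleton X := by
  have h0 : (𝟙 X : X ⟶ X) = 0 := h.eq_of_src _ _
  refine ⟨fun a b => ?_⟩
  have hx : ∀ x : X, x = 0 := by
    intro x
    have : (𝟙 X : X ⟶ X) x = (0 : X ⟶ X) x := by rw [h0]
    simpa using this
  rw [hx a, hx b]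

theorem phi_range_projective_d {S : Type u} [CommRing S] {A B : ModuleCat.{u} S} (φ : A ⟶ B) :
    LinearMap.range (Projective.d φ : Projective.syzygies φ ⟶ A).hom = LinearMap.ker φ.hom := by
  have h1 : Function.Surjective (Projective.π (kernel φ)) :=
    (ModuleCat.epi_iff_surjective _).1 inferInstance
  have hι : (kernel.ι φ : kernel φ ⟶ A)
      = (ModuleCat.kernelIsoKer φ).hom ≫ ModuleCat.ofHom (LinearMap.ker φ.hom).subtype := by
    rw [← ModuleCat.kernelIsoKer_inv_kernel_ι φ, ← Category.assoc, Iso.hom_inv_id,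
      Category.id_comp]
  have h2 : Function.Surjective ((ModuleCat.kernelIsoKer φ).hom) :=
    (ModuleCat.epi_iff_surjective _).1 inferInstance
  have hcomp : Projective.d φ ≫ φ = 0 := by erw [Category.assoc, kernel.condition, comp_zero]
  apply le_antisymm
  · rintro x ⟨y, rfl⟩
    show φ ((Projective.d φ) y) = 0
    have hy : φ ((Projective.d φ) y) = (Projective.d φ ≫ φ) y := rfl
    rw [hy, hcomp]
    rfl
  · intro x hx
    obtain ⟨k, hk⟩ := h2 ((⟨x, hx⟩ : LinearMap.ker φ.hom))
    obtain ⟨s, hs⟩ := h1 k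
    refine ⟨s, ?_⟩
    have e1 : (Projective.d φ) s = (kernel.ι φ) ((Projective.π (kernel φ)) s) := rfl
    rw [e1, hs, hι]
    have e2 : ((ModuleCat.kernelIsoKer φ).hom ≫ ModuleCat.ofHom (LinearMap.ker φ.hom).subtype) k
        = (LinearMap.ker φ.hom).subtype ((ModuleCat.kernelIsoKer φ).hom k) := rfl
    rw [e2, hk]
    rfl
theorem phi_ext_iff {S : Type u} [CommRing S] {T P : ModuleCat.{u} S}
    [Projective P] (π : P ⟶ T) [Epi π] (M : ModuleCat.{u} S) :
    Subsingleton (((Ext S (ModuleCat.{u} S) 1).obj (Opposite.op T)).obj M) ↔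
      ∀ f : ↥(LinearMap.ker π.hom) →ₗ[S] ↥M, ∃ g : ↥P →ₗ[S] ↥M,
        ∀ x : ↥(LinearMap.ker π.hom), g x.1 = f x := by
  classical
  have e := (ProjectiveResolution.isoExt (R := S) (PhiAux.resOf π) 1 M).toLinearEquiv.toEquiv
  rw [e.subsingleton_congr]
  set K := (PhiAux.resOf π).complex.linearYonedaObj S M with hK
  have h1 : Subsingleton (K.homology 1) ↔ K.ExactAt 1 := by
    rw [HomologicalComplex.exactAt_iff_isZero_homology]
    exact ⟨fun h => @ModuleCat.isZero_of_subsingleton _ _ _ h,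
      fun h => phi_subsingleton_of_isZero h⟩
  rw [h1, HomologicalComplex.exactAt_iff' K 0 1 2 (by simp) (by simp),
    ShortComplex.moduleCat_exact_iff]
  set D1 : (PhiAux.ofComplex' π).X 1 ⟶ (PhiAux.ofComplex' π).X 0 := (PhiAux.ofComplex' π).d 1 0 with hD1
  set D2 : (PhiAux.ofComplex' π).X 2 ⟶ (PhiAux.ofComplex' π).X 1 := (PhiAux.ofComplex' π).d 2 1 with hD2
  have hD1range : LinearMap.range D1.hom = LinearMap.ker π.hom := by
    rw [hD1, PhiAux.ofComplex'_d_1_0]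
    exact phi_range_projective_d π
  have hD21 : ∀ y, D1 (D2 y) = 0 := by
    intro y
    have h := (PhiAux.ofComplex' π).d_comp_d 2 1 0
    exact ConcreteCategory.congr_hom h y
  have hexact1 : ∀ x, D1 x = 0 → ∃ y, D2 y = x := by
    have h := PhiAux.ofComplex'_exactAt_succ π 0
    rw [HomologicalComplex.exactAt_iff' _ 2 1 0 (by simp) (by simp),
      ShortComplex.moduleCat_exact_iff] at h
    exact h
  have hg_eq : ∀ (φ : (PhiAux.ofComplex' π).X 1 ⟶ M),
      (K.sc' 0 1 2).g φ = D2 ≫ φ := fun φ => rfl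
  have hf_eq : ∀ (ψ : (PhiAux.ofComplex' π).X 0 ⟶ M),
      (K.sc' 0 1 2).f ψ = D1 ≫ ψ := fun ψ => rfl
  have hmem : ∀ x, D1 x ∈ LinearMap.ker π.hom := by
    intro x
    rw [← hD1range]
    exact LinearMap.mem_range_self D1.hom x
  set ρ : (PhiAux.ofComplex' π).X 1 →ₗ[S] ↥(LinearMap.ker π.hom) :=
    LinearMap.codRestrict (LinearMap.ker π.hom) D1.hom hmem with hρ
  constructor
  · intro hex f
    let F : ((PhiAux.ofComplex' π).X 1 ⟶ M) := ModuleCat.ofHom (f.comp ρ)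
    have hF0 : (K.sc' 0 1 2).g F = 0 := by
      rw [hg_eq]
      apply ModuleCat.hom_ext
      apply LinearMap.ext
      intro y
      show F (D2 y) = 0
      have hz : ρ (D2 y) = 0 := Subtype.ext (hD21 y)
      show f (ρ (D2 y)) = 0
      rw [hz, map_zero]
    obtain ⟨G, hG⟩ := hex F hF0
    let G' : (PhiAux.ofComplex' π).X 0 ⟶ M := G
    have hG' : D1 ≫ G' = F := by rw [← hf_eq G']; exact hG
    refine ⟨G'.hom, fun x => ?_⟩
    obtain ⟨y, hy⟩ : x.1 ∈ LinearMap.range D1.hom := by rw [hD1range]; exact x.2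
    have h2 : G' (D1 y) = F y := ConcreteCategory.congr_hom hG' y
    have h6 : ρ y = x := Subtype.ext hy
    calc G' x.1 = G' (D1 y) := by rw [hy]
      _ = F y := h2
      _ = f (ρ y) := rfl
      _ = f x := by rw [h6]
  · intro hext F hF0
    let F' : (PhiAux.ofComplex' π).X 1 ⟶ M := F
    have hF0' : D2 ≫ F' = 0 := by rw [← hg_eq F']; exact hF0
    have hsurj : Function.Surjective ρ := by
      rintro ⟨x, hx⟩
      obtain ⟨y, hy⟩ : x ∈ LinearMap.range D1.hom := by rw [hD1range]; exact hx
      exact ⟨y, Subtype.ext hy⟩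
    have hker : ∀ y, ρ y = 0 → F' y = 0 := by
      intro y hy0
      have hd0 : D1 y = 0 := congrArg Subtype.val hy0
      obtain ⟨z, hz⟩ := hexact1 y hd0
      rw [← hz]
      exact ConcreteCategory.congr_hom hF0' z
    obtain ⟨w, hw⟩ := phi_exists_factor ρ (F'.hom : (PhiAux.ofComplex' π).X 1 →ₗ[S] M) hsurj hker
    obtain ⟨g, hg⟩ := hext w
    let g' : (PhiAux.ofComplex' π).X 0 ⟶ M := ModuleCat.ofHom g
    have hDone : D1 ≫ g' = F' := by
      apply ModuleCat.hom_ext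
      apply LinearMap.ext
      intro y
      show g' (D1 y) = F' y
      have h3 : g (ρ y).1 = w (ρ y) := hg (ρ y)
      have h4 : (ρ y).1 = D1 y := rfl
      rw [← h4]
      show g (ρ y).1 = F' y
      rw [h3, hw y]
    refine ⟨g', ?_⟩
    rw [hf_eq g']
    exact hDone

end PhiAuxSection

/-- Let `R` be a φ-ring and `M` an `R/Nil(R)`-module which is FP-injective
over `R/Nil(R)`. Then `M`, viewed as an `R`-module, is nonnil-FP-injective over `R`. -/
theorem stmt_8 (R : Type u) [CommRing R]
    (hp : (nilradical R).IsPrime)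
    (hdiv : ∀ x ∉ nilradical R, nilradical R < Ideal.span {x})
    (M : Type u) [AddCommGroup M] [Module R M] [Module (R ⧸ nilradical R) M]
    [IsScalarTower R (R ⧸ nilradical R) M]
    (hFP : ∀ T : ModuleCat.{u} (R ⧸ nilradical R),
      Module.FinitePresentation (R ⧸ nilradical R) T →
      Subsingleton (((Ext (R ⧸ nilradical R) (ModuleCat.{u} (R ⧸ nilradical R)) 1).obj
        (Opposite.op T)).obj (ModuleCat.of (R ⧸ nilradical R) M))) :
    ∀ T : ModuleCat.{u} R, Module.FinitePresentation R T → IsPhiTorsion R T →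
      Subsingleton (((Ext R (ModuleCat.{u} R) 1).obj (Opposite.op T)).obj
        (ModuleCat.of R M)) := by
  classical
  intro T hTfp hTtor
  haveI := hTfp
  have hmksM : ∀ (c : R) (x : M), (Ideal.Quotient.mk (nilradical R) c) • x = c • x := by
    intro c x
    rw [← Ideal.Quotient.algebraMap_eq, algebraMap_smul]
  have hNM : ∀ c ∈ (nilradical R), ∀ x : M, c • x = 0 := by
    intro c hc x
    rw [← hmksM c x, Ideal.Quotient.eq_zero_iff_mem.2 hc, zero_smul]
  -- presentation of T over R
  obtain ⟨n, π₀, hπ₀⟩ := Module.Finite.exists_fin' R T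
  set t : Fin n → T := fun i => π₀ (Pi.single i 1) with ht
  have hsum : ∀ v : Fin n → R, π₀ v = ∑ i, v i • t i := by
    intro v
    conv_lhs => rw [← Finset.univ_sum_single v, map_sum]
    refine Finset.sum_congr rfl fun i _ => ?_
    rw [ht]
    rw [show Pi.single i (v i) = v i • (Pi.single i 1 : Fin n → R) by
      rw [← Pi.single_smul, smul_eq_mul, mul_one]]
    rw [map_smul]
  -- a nonnil annihilator of T
  choose I hInle hIann using fun i => hTtor (t i)
  choose aa haaI haaN using fun i => SetLike.not_le_iff_exists.1 (hInle i)
  set a : R := ∏ i, aa i with ha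
  have haN : a ∉ (nilradical R) := by
    rw [ha]
    refine Finset.prod_induction aa (· ∉ (nilradical R)) (fun x y hx hy hxy => ?_) (fun h1 => ?_) (fun i _ => haaN i)
    · rcases hp.mem_or_mem hxy with h | h
      · exact hx h
      · exact hy h
    · exact hp.ne_top ((Ideal.eq_top_iff_one (nilradical R)).2 h1)
  have key : ∀ i, a • t i = 0 := by
    intro i
    rw [ha, ← Finset.prod_erase_mul Finset.univ aa (Finset.mem_univ i), mul_smul,
      hIann i (aa i) (haaI i), smul_zero]
  have haT : ∀ x : T, a • x = 0 := by
    intro x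
    obtain ⟨v, rfl⟩ := hπ₀ x
    rw [hsum, Finset.smul_sum]
    refine Finset.sum_eq_zero fun i _ => ?_
    rw [smul_comm, key i, smul_zero]
  have hNil : ∀ c ∈ (nilradical R), ∀ x : T, c • x = 0 := by
    intro c hc x
    obtain ⟨d, hd⟩ := Ideal.mem_span_singleton'.1 ((hdiv a haN).le hc)
    rw [← hd, mul_smul, haT, smul_zero]
  -- R/(nilradical R)-module structure on T
  have htb : Module.IsTorsionBySet R T (nilradical R) := fun x c => hNil c.1 c.2 x
  letI : Module (R ⧸ (nilradical R)) T := htb.module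
  haveI : IsScalarTower R (R ⧸ (nilradical R)) T := htb.isScalarTower
  have hmks : ∀ (c : R) (x : T), (Ideal.Quotient.mk (nilradical R) c) • x = c • x := htb.mk_smul
  -- finite presentation over R/(nilradical R) via base change
  have hbc : IsBaseChange (R ⧸ (nilradical R)) (LinearMap.id : T →ₗ[R] T) := by
    apply IsBaseChange.of_lift_unique
    intro Q _ _ _ _ g
    refine ⟨{ toFun := g, map_add' := g.map_add, map_smul' := ?_ }, ?_, ?_⟩
    · intro cb x
      obtain ⟨c, rfl⟩ := Ideal.Quotient.mk_surjective cb
      show g ((Ideal.Quotient.mk (nilradical R) c) • x) = (Ideal.Quotient.mk (nilradical R) c) • g x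
      rw [hmks, map_smul, ← Ideal.Quotient.algebraMap_eq, algebraMap_smul]
    · rfl
    · intro g' hg'
      ext x
      exact DFunLike.congr_fun hg' x
  haveI hTfpQ : Module.FinitePresentation (R ⧸ (nilradical R)) T :=
    FinitePresentation.of_isBaseChange (LinearMap.id : T →ₗ[R] T) hbc
  -- the R/(nilradical R) presentation
  let πb : (Fin n → R ⧸ (nilradical R)) →ₗ[R ⧸ (nilradical R)] T :=
    { toFun := fun v => ∑ i, v i • t i
      map_add' := by
        intro u v
        simp [add_smul, Finset.sum_add_distrib]
      map_smul' := by
        intro c v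
        simp [Finset.smul_sum, Pi.smul_apply, smul_smul] }
  have hπb : ∀ v, πb v = ∑ i, v i • t i := fun v => rfl
  have hπbsurj : Function.Surjective πb := by
    intro x
    obtain ⟨v, rfl⟩ := hπ₀ x
    refine ⟨fun i => Ideal.Quotient.mk (nilradical R) (v i), ?_⟩
    rw [hπb, hsum]
    exact Finset.sum_congr rfl fun i _ => by rw [hmks]
  let T' : ModuleCat.{u} (R ⧸ (nilradical R)) := ModuleCat.of (R ⧸ (nilradical R)) T
  let Pb : ModuleCat.of (R ⧸ (nilradical R)) (Fin n → R ⧸ (nilradical R)) ⟶ T' := ModuleCat.ofHom πb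
  haveI : Projective (ModuleCat.of (R ⧸ (nilradical R)) (Fin n → R ⧸ (nilradical R))) :=
    ModuleCat.projective_of_free (Pi.basisFun (R ⧸ (nilradical R)) (Fin n))
  haveI : Epi Pb := (ModuleCat.epi_iff_surjective _).2 hπbsurj
  have hsub := hFP T' hTfpQ
  have hextbar := (phi_ext_iff Pb (ModuleCat.of (R ⧸ (nilradical R)) M)).1 hsub
  -- the R side
  let P₀ : ModuleCat.{u} R := ModuleCat.of R (Fin n → R)
  let πm : P₀ ⟶ T := ModuleCat.ofHom π₀
  haveI : Projective P₀ := ModuleCat.projective_of_free (Pi.basisFun R (Fin n))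
  haveI : Epi πm := (ModuleCat.epi_iff_surjective _).2 hπ₀
  refine (phi_ext_iff πm (ModuleCat.of R M)).2 ?_
  intro f
  -- the quotient map, componentwise
  let qm : (Fin n → R) →ₗ[R] (Fin n → R ⧸ (nilradical R)) :=
    LinearMap.pi fun i => (Algebra.linearMap R (R ⧸ (nilradical R))).comp (LinearMap.proj i)
  have hqm : ∀ (v : Fin n → R) (i), qm v i = Ideal.Quotient.mk (nilradical R) (v i) := by
    intro v i
    simp [qm, Ideal.Quotient.algebraMap_eq]
  have hcompat : ∀ v, πb (qm v) = π₀ v := by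
    intro v
    rw [hπb, hsum]
    exact Finset.sum_congr rfl fun i _ => by rw [hqm, hmks]
  -- Step 1 : f vanishes on ker π₀ ∩ (nilradical R)^n
  have step1 : ∀ (k : Fin n → R) (hk : k ∈ LinearMap.ker πm.hom), (∀ i, k i ∈ (nilradical R)) →
      f ⟨k, hk⟩ = 0 := by
    intro k hk hkN
    have hc : ∀ i, ∃ c, c ∈ (nilradical R) ∧ k i = c * a := by
      intro i
      obtain ⟨c, hc⟩ := Ideal.mem_span_singleton'.1 ((hdiv a haN).le (hkN i))
      refine ⟨c, ?_, hc.symm⟩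
      have hca : c * a ∈ (nilradical R) := hc ▸ hkN i
      rcases hp.mem_or_mem hca with h | h
      · exact h
      · exact absurd h haN
    choose c hcN hck using hc
    have hu : ∀ i, a • (Pi.single i 1 : Fin n → R) ∈ LinearMap.ker πm.hom := by
      intro i
      show π₀ (a • (Pi.single i 1 : Fin n → R)) = 0
      rw [map_smul]
      exact key i
    have hksum : (⟨k, hk⟩ : LinearMap.ker πm.hom)
        = ∑ i, c i • (⟨a • (Pi.single i 1 : Fin n → R), hu i⟩ : LinearMap.ker πm.hom) := by
      apply Subtype.ext
      push_cast
      rw [show (∑ i, c i • (a • (Pi.single i 1 : Fin n → R))) = ∑ i, Pi.single i (k i) by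
        refine Finset.sum_congr rfl fun i _ => ?_
        rw [smul_smul, ← hck i, ← Pi.single_smul, smul_eq_mul, mul_one]]
      exact (Finset.univ_sum_single k).symm
    rw [hksum, map_sum]
    refine Finset.sum_eq_zero fun i _ => ?_
    rw [map_smul]
    exact hNM (c i) (hcN i) _
  -- build the R/(nilradical R)-linear map on ker πb
  let Kb := LinearMap.ker πb
  have hland : ∀ x : LinearMap.ker πm.hom, qm x.1 ∈ Kb.restrictScalars R := by
    intro x
    show πb (qm x.1) = 0
    rw [hcompat]
    exact x.2
  let D : LinearMap.ker πm.hom →ₗ[R] ↥(Kb.restrictScalars R) :=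
    LinearMap.codRestrict (Kb.restrictScalars R) (qm.comp (LinearMap.ker πm.hom).subtype) hland
  have hDval : ∀ x : LinearMap.ker πm.hom, (D x).1 = qm x.1 := fun x => rfl
  have hDsurj : Function.Surjective D := by
    rintro ⟨x, hx⟩
    choose v hv using fun i => Ideal.Quotient.mk_surjective (x i)
    have hqv : qm v = x := funext fun i => by rw [hqm]; exact hv i
    have hvker : v ∈ LinearMap.ker πm.hom := by
      show π₀ v = 0
      rw [← hcompat v, hqv]
      exact hx
    exact ⟨⟨v, hvker⟩, Subtype.ext hqv⟩
  have hDker : ∀ x, D x = 0 → f x = 0 := by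
    intro x hx
    refine step1 x.1 x.2 fun i => ?_
    have h0 : qm x.1 = 0 := congrArg Subtype.val hx
    have := congrFun h0 i
    rw [hqm] at this
    exact Ideal.Quotient.eq_zero_iff_mem.1 this
  obtain ⟨w, hw⟩ := phi_exists_factor D f hDsurj hDker
  let w2 : ↥(Kb.restrictScalars R) →ₗ[R] M := w
  have hw2 : ∀ x, w2 (D x) = f x := hw
  -- upgrade w to an R/(nilradical R)-linear map on Kb
  let fbar : Kb →ₗ[R ⧸ (nilradical R)] M :=
    { toFun := fun y => w2 ⟨y.1, y.2⟩
      map_add' := by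
        intro y z
        rw [← map_add w2]
        congr 1
      map_smul' := by
        intro cb y
        obtain ⟨cc, rfl⟩ := Ideal.Quotient.mk_surjective cb
        obtain ⟨x, hx⟩ := hDsurj ⟨y.1, y.2⟩
        have h1 : (⟨((Ideal.Quotient.mk (nilradical R) cc) • y).1, ((Ideal.Quotient.mk (nilradical R) cc) • y).2⟩
            : ↥(Kb.restrictScalars R)) = D (cc • x) := by
          apply Subtype.ext
          show ((Ideal.Quotient.mk (nilradical R) cc) • y).1 = qm ((cc • x) : LinearMap.ker πm.hom).1
          have h2 : ((cc • x) : LinearMap.ker πm.hom).1 = cc • x.1 := rfl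
          rw [h2]
          have h3 : qm (cc • x.1) = (Ideal.Quotient.mk (nilradical R) cc) • qm x.1 := by
            funext i
            rw [hqm]
            show Ideal.Quotient.mk (nilradical R) (cc • x.1 i) = ((Ideal.Quotient.mk (nilradical R) cc) • qm x.1) i
            rw [Pi.smul_apply, hqm, smul_eq_mul, smul_eq_mul, map_mul]
          rw [h3]
          have h4 : qm x.1 = y.1 := congrArg Subtype.val hx
          rw [h4]
          rfl
        show w2 ⟨((Ideal.Quotient.mk (nilradical R) cc) • y).1, ((Ideal.Quotient.mk (nilradical R) cc) • y).2⟩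
            = (Ideal.Quotient.mk (nilradical R) cc) • w2 ⟨y.1, y.2⟩
        rw [h1, hw2]
        have h5 : (⟨y.1, y.2⟩ : ↥(Kb.restrictScalars R)) = D x := hx.symm
        rw [h5, hw2]
        rw [map_smul]
        rw [hmksM]
      }
  obtain ⟨G, hG⟩ := hextbar fbar
  -- the extension over R
  let G' : (Fin n → R ⧸ nilradical R) →ₗ[R ⧸ nilradical R] M := G
  let g : (Fin n → R) →ₗ[R] M := (G'.restrictScalars R).comp qm
  refine ⟨g, fun x => ?_⟩
  have h8 : fbar ⟨qm x.1, hland x⟩ = w2 (D x) := rfl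
  exact (hG ⟨qm x.1, hland x⟩).trans (h8.trans (hw2 x))
end

section
/- Let R be a φ-ring. If every R-module is nonnil-FP-injective, then every finitely generated nonnil ideal I of R satisfies I² = I; moreover R/I is a projective R-module for every such I. -/
open CategoryTheory Limits

lemma aux_proj {R : Type u} [CommRing R] (T : ModuleCat.{u} R)
    (h : ∀ M : ModuleCat.{u} R,
      Subsingleton (((Ext R (ModuleCat.{u} R) 1).obj (Opposite.op T)).obj M)) :
    Module.Projective R T := by
  obtain ⟨P⟩ : Nonempty (ProjectiveResolution T) := HasProjectiveResolution.out
  have key : ∀ (M : ModuleCat.{u} R) (φ : P.complex.X 1 ⟶ M),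
      P.complex.d 2 1 ≫ φ = 0 → ∃ ψ : P.complex.X 0 ⟶ M, P.complex.d 1 0 ≫ ψ = φ := by
    intro M φ hφ
    have hz : IsZero ((P.complex.linearYonedaObj R M).homology 1) := by
      have := h M
      exact (ModuleCat.isZero_of_subsingleton _).of_iso (P.isoExt 1 M).symm
    have hex : (P.complex.linearYonedaObj R M).ExactAt 1 :=
      (HomologicalComplex.exactAt_iff_isZero_homology _ _).2 hz
    rw [HomologicalComplex.exactAt_iff' _ 0 1 2 (by simp) (by simp),
      ShortComplex.moduleCat_exact_iff] at hex
    obtain ⟨ψ, hψ⟩ := hex φ (by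
      exact hφ)
    refine ⟨ψ, ?_⟩
    exact hψ
  -- notation
  set X0 := P.complex.X 0 with hX0
  set π₀ : P.complex.X 0 ⟶ T := P.π.f 0 with hπ₀
  have hπsurj : Function.Surjective π₀ := by
    rw [← ModuleCat.epi_iff_surjective, hπ₀]; exact (inferInstance : Epi (P.π.f 0))
  have hdπ : ∀ x, π₀ (P.complex.d 1 0 x) = 0 := by
    intro x
    have := P.complex_d_comp_π_f_zero
    exact congrArg (fun f => ModuleCat.Hom.hom f x) this
  -- exactness at degree 0
  have hex0 : ∀ y : P.complex.X 0, π₀ y = 0 → ∃ x, P.complex.d 1 0 x = y := by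
    have := P.exact₀
    rw [ShortComplex.moduleCat_exact_iff] at this
    exact this
  -- the kernel module
  set Kmod := ModuleCat.of R (LinearMap.ker π₀.hom) with hK
  set φ : P.complex.X 1 ⟶ Kmod :=
    ModuleCat.ofHom (LinearMap.codRestrict _ (P.complex.d 1 0).hom (fun x => hdπ x)) with hφdef
  have hφ : P.complex.d 2 1 ≫ φ = 0 := by
    ext x
    show P.complex.d 1 0 ((P.complex.d 2 1) x) = 0
    have := P.complex.d_comp_d 2 1 0
    exact congrArg (fun f => ModuleCat.Hom.hom f x) this
  obtain ⟨ψ, hψ⟩ := key Kmod φ hφ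
  have hψ' : ∀ x, ψ (P.complex.d 1 0 x) = φ x :=
    fun x => congrArg (fun f => ModuleCat.Hom.hom f x) hψ
  have hret : ∀ (y : P.complex.X 0), π₀ y = 0 → (ψ y).1 = y := by
    intro y hy
    obtain ⟨x, rfl⟩ := hex0 y hy
    rw [hψ' x]
    rfl
  -- build the splitting
  set q : P.complex.X 0 →ₗ[R] P.complex.X 0 :=
    LinearMap.id - (LinearMap.ker π₀.hom).subtype ∘ₗ ψ.hom with hq
  have hker : LinearMap.ker π₀.hom ≤ LinearMap.ker q := by
    intro y hy
    have := hret y hy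
    simp only [hq, LinearMap.mem_ker, LinearMap.sub_apply, LinearMap.id_apply,
      LinearMap.comp_apply, Submodule.subtype_apply]
    exact sub_eq_zero_of_eq this.symm
  set s : T →ₗ[R] P.complex.X 0 :=
    (Submodule.liftQ _ q hker) ∘ₗ
      (LinearMap.quotKerEquivOfSurjective _ hπsurj).symm.toLinearMap with hs
  have hcomp : ∀ t, π₀ (s t) = t := by
    intro t
    obtain ⟨y, rfl⟩ := hπsurj t
    have h1 : (LinearMap.quotKerEquivOfSurjective π₀.hom hπsurj).symm (π₀ y)
        = Submodule.Quotient.mk y := by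
      rw [LinearEquiv.symm_apply_eq]
      rfl
    have h2 : s (π₀ y) = q y := by
      rw [hs, LinearMap.comp_apply, LinearEquiv.coe_toLinearMap, h1]
      rfl
    rw [h2, hq]
    simp only [LinearMap.sub_apply, LinearMap.id_apply, LinearMap.comp_apply,
      Submodule.subtype_apply, map_sub]
    have : π₀ ((ψ y).1) = 0 := (ψ y).2
    exact sub_eq_self.2 this
  have hX0proj : Module.Projective R (P.complex.X 0) := by
    have : Projective (P.complex.X 0) := inferInstance
    exact (IsProjective.iff_projective (P.complex.X 0)).2 this
  exact Module.Projective.of_split s π₀.hom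
    (LinearMap.ext fun t => hcomp t)

/-- Let `R` be a φ-ring. If every `R`-module is nonnil-FP-injective, then
every finitely generated nonnil ideal `I` satisfies `I² = I` and `R/I` is projective. -/
theorem stmt_12 (R : Type u) [CommRing R]
    (hp : (nilradical R).IsPrime)
    (hdiv : ∀ x ∉ nilradical R, nilradical R < Ideal.span {x})
    (h : ∀ (M : ModuleCat.{u} R) (T : ModuleCat.{u} R),
      Module.FinitePresentation R T → IsPhiTorsion R T →
      Subsingleton (((Ext R (ModuleCat.{u} R) 1).obj (Opposite.op T)).obj M)) :
    ∀ I : Ideal R, I.FG → ¬ I ≤ nilradical R →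
      I * I = I ∧ Module.Projective R (R ⧸ I) := by
  intro I hFG hI
  have hfp : Module.FinitePresentation R (R ⧸ I) :=
    Module.finitePresentation_of_surjective I.mkQ (Submodule.mkQ_surjective I)
      (by rwa [Submodule.ker_mkQ])
  have htor : IsPhiTorsion R (R ⧸ I) := by
    intro x
    refine ⟨I, hI, fun a ha => ?_⟩
    obtain ⟨y, rfl⟩ := Submodule.mkQ_surjective I x
    show a • Submodule.Quotient.mk y = 0
    rw [← Submodule.Quotient.mk_smul, Submodule.Quotient.mk_eq_zero]
    exact smul_eq_mul a y ▸ Ideal.mul_mem_right y I ha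
  have hproj : Module.Projective R (R ⧸ I) :=
    aux_proj (ModuleCat.of R (R ⧸ I)) (fun M => h M (ModuleCat.of R (R ⧸ I)) hfp htor)
  refine ⟨?_, hproj⟩
  obtain ⟨s, hs⟩ := Module.projective_lifting_property I.mkQ
    (LinearMap.id : (R ⧸ I) →ₗ[R] (R ⧸ I)) (Submodule.mkQ_surjective I)
  set c : R := s (Submodule.Quotient.mk 1) with hc
  have hmkc : Submodule.Quotient.mk c = (Submodule.Quotient.mk 1 : R ⧸ I) := by
    have := LinearMap.congr_fun hs (Submodule.Quotient.mk 1)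
    rw [hc]
    simpa using this
  have h1c : 1 - c ∈ I := by
    rw [← Submodule.Quotient.mk_eq_zero, Submodule.Quotient.mk_sub, hmkc, sub_self]
  refine le_antisymm Ideal.mul_le_left fun a ha => ?_
  have hac : a * c = 0 := by
    have h0 : (Submodule.Quotient.mk a : R ⧸ I) = 0 := (Submodule.Quotient.mk_eq_zero I).2 ha
    have h1 : a • (Submodule.Quotient.mk 1 : R ⧸ I) = Submodule.Quotient.mk a := by
      rw [← Submodule.Quotient.mk_smul, smul_eq_mul, mul_one]
    calc a * c = a • c := (smul_eq_mul a c).symm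
      _ = s (a • (Submodule.Quotient.mk 1 : R ⧸ I)) := (map_smul s a _).symm
      _ = s (Submodule.Quotient.mk a) := by rw [h1]
      _ = s 0 := by rw [h0]
      _ = 0 := map_zero s
  have : a = a * (1 - c) := by rw [mul_sub, mul_one, hac, sub_zero]
  rw [this]
  exact Ideal.mul_mem_mul ha h1c
end

section
/- Let R be a φ-ring. If R is nonnil-Noetherian (every nonnil ideal is finitely generated), then every nonnil-FP-injective R-module is nonnil-injective. -/
open CategoryTheory

/-- Let `R` be a nonnil-Noetherian φ-ring (every nonnil ideal is finitely
generated). Then every nonnil-FP-injective `R`-module is nonnil-injective. -/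
theorem stmt_13 (R : Type u) [CommRing R]
    (hp : (nilradical R).IsPrime)
    (hdiv : ∀ x ∉ nilradical R, nilradical R < Ideal.span {x})
    (hnoeth : ∀ I : Ideal R, ¬ I ≤ nilradical R → I.FG) :
    ∀ M : ModuleCat.{u} R,
      (∀ T : ModuleCat.{u} R, Module.FinitePresentation R T → IsPhiTorsion R T →
        Subsingleton (((Ext R (ModuleCat.{u} R) 1).obj (Opposite.op T)).obj M)) →
      ∀ I : Ideal R, ¬ I ≤ nilradical R →
        Subsingleton (((Ext R (ModuleCat.{u} R) 1).obj
          (Opposite.op (ModuleCat.of R (R ⧸ I)))).obj M) := by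
  intro M hM I hI
  apply hM
  · have hfg : (LinearMap.ker (I.mkQ)).FG := by
      rw [Submodule.ker_mkQ]
      exact hnoeth I hI
    exact Module.finitePresentation_of_surjective I.mkQ (Submodule.mkQ_surjective I) hfg
  · intro x
    obtain ⟨r, rfl⟩ := Submodule.mkQ_surjective I x
    exact ⟨I, hI, fun a ha => by
      show a • Submodule.Quotient.mk r = 0
      rw [← Submodule.Quotient.mk_smul I, Submodule.Quotient.mk_eq_zero]
      exact I.mul_mem_right r ha⟩
end

section
/- Let R be a ZN-ring that is also an NP-ring, and E an R-module. Then E is nonnil-divisible (for every m ∈ E and every non-nilpotent a ∈ R there exists x ∈ E with ax = m) if and only if Ext¹_R(R/⟨a⟩, E) = 0 for every non-nilpotent element a of R. -/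
open CategoryTheory

open CategoryTheory Limits
noncomputable section
universe u
variable {R : Type u} [CommRing R]

namespace Stmt14Aux

variable (R) in
def XX : ℕ → ModuleCat.{u} R
  | 0 => ModuleCat.of R R
  | 1 => ModuleCat.of R R
  | _ + 2 => ModuleCat.of R PUnit

def dd (a : R) : ∀ n : ℕ, XX R (n + 1) ⟶ XX R n
  | 0 => ModuleCat.ofHom (LinearMap.lsmul R R a)
  | _ + 1 => 0

def P (a : R) : ChainComplex (ModuleCat.{u} R) ℕ :=
  ChainComplex.of (XX R) (dd a) (fun n =>
    show (0 : XX R (n+2) ⟶ XX R (n+1)) ≫ _ = 0 by simp)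

lemma P_d10 (a : R) : (P a).d 1 0 = ModuleCat.ofHom (LinearMap.lsmul R R a) :=
  ChainComplex.of_d (XX R) (dd a) 0

lemma P_d21 (a : R) : (P a).d 2 1 = 0 := ChainComplex.of_d (XX R) (dd a) 1

instance projP (a : R) (n : ℕ) : Projective ((P a).X n) :=
  match n with
  | 0 => ModuleCat.projective_of_free (M := ModuleCat.of R R) (Module.Basis.singleton PUnit.{u+1} R)
  | 1 => ModuleCat.projective_of_free (M := ModuleCat.of R R) (Module.Basis.singleton PUnit.{u+1} R)
  | _ + 2 => (ModuleCat.isZero_of_subsingleton (ModuleCat.of R PUnit)).projective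

variable (a : R)

abbrev Q : ModuleCat.{u} R := ModuleCat.of R (R ⧸ Ideal.span {a})

def gg : XX R 0 ⟶ Q a := ModuleCat.ofHom (Submodule.mkQ (Ideal.span {a}))

lemma d_comp_gg : (P a).d 1 0 ≫ gg a = 0 := by
  rw [P_d10]
  refine ModuleCat.hom_ext (LinearMap.ext fun (x : R) => ?_)
  show Submodule.mkQ _ (a • x) = 0
  rw [Submodule.mkQ_apply, Submodule.Quotient.mk_eq_zero]
  exact Ideal.mem_span_singleton.2 ⟨x, rfl⟩

def pi : P a ⟶ (ChainComplex.single₀ (ModuleCat.{u} R)).obj (Q a) :=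
  ((P a).toSingle₀Equiv (Q a)).symm ⟨gg a, d_comp_gg a⟩

lemma pi_f0 : (pi a).f 0 = gg a := ChainComplex.toSingle₀Equiv_symm_apply_f_zero _ _

end Stmt14Aux

namespace Stmt14Aux
variable {R : Type u} [CommRing R] {a : R}

lemma epi_gg : Epi (gg a) := by
  rw [ModuleCat.epi_iff_surjective]
  exact Submodule.mkQ_surjective (Ideal.span {a})

def SC : ShortComplex (ModuleCat.{u} R) := ShortComplex.mk ((P a).d 1 0) (gg a) (d_comp_gg a)

lemma SC_exact : (SC (a := a)).Exact := by
  rw [ShortComplex.moduleCat_exact_iff]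
  intro x hx
  obtain ⟨c, hc⟩ := Ideal.mem_span_singleton.1
    ((Submodule.Quotient.mk_eq_zero _).1 hx)
  exact ⟨c, by simp [SC, P_d10, ModuleCat.ofHom]; exact (LinearMap.lsmul_apply a c).trans hc.symm⟩

lemma quasi0 : QuasiIsoAt (pi a) 0 := by
  rw [ChainComplex.quasiIsoAt₀_iff, ShortComplex.quasiIso_iff_isIso_descOpcycles _
    (by simp; rfl) (by simp; rfl) (by simp; rfl)]
  set S₁ := (P a).sc' 1 0 0 with hS₁
  have hcok : IsColimit (CokernelCofork.ofπ (SC (a := a)).g (SC (a := a)).zero) := by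
    have : Epi (SC (a := a)).g := epi_gg
    exact SC_exact.gIsCokernel
  let e := IsColimit.coconePointUniqueUpToIso S₁.opcyclesIsCokernel hcok
  have he : S₁.pOpcycles ≫ e.hom = gg a := by
    exact IsColimit.comp_coconePointUniqueUpToIso_hom S₁.opcyclesIsCokernel hcok
      WalkingParallelPair.one
  have heq : ((HomologicalComplex.shortComplexFunctor' (ModuleCat.{u} R)
        (ComplexShape.down ℕ) 1 0 0).obj (P a)).descOpcycles
      ((HomologicalComplex.shortComplexFunctor' (ModuleCat.{u} R)
        (ComplexShape.down ℕ) 1 0 0).map (pi a)).τ₂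
      (by rw [← ((HomologicalComplex.shortComplexFunctor' (ModuleCat.{u} R)
            (ComplexShape.down ℕ) 1 0 0).map (pi a)).comm₁₂]; simp; exact comp_zero) = e.hom := by
    refine (cancel_epi S₁.pOpcycles).1 ?_
    exact (ShortComplex.p_descOpcycles _ _ _).trans ((pi_f0 a).trans he.symm)
  rw [heq]
  exact e.isIso_hom
end Stmt14Aux

namespace Stmt14Aux
variable {R : Type u} [CommRing R] {a : R}

lemma exact_single (i : ℕ) :
    (((ChainComplex.single₀ (ModuleCat.{u} R)).obj (Q a))).ExactAt (i + 1) := by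
  rw [HomologicalComplex.exactAt_iff]
  exact ShortComplex.exact_of_isZero_X₂ _
    (HomologicalComplex.isZero_single_obj_X (ComplexShape.down ℕ) 0 (Q a) (i+1) (by simp))

lemma exactP1 (ha : a ∈ nonZeroDivisors R) : (P a).ExactAt 1 := by
  rw [(P a).exactAt_iff' 2 1 0 (by simp) (by simp), ShortComplex.moduleCat_exact_iff]
  intro x hx
  refine ⟨0, ?_⟩
  have hx' : a * (show R from x) = 0 := by
    rw [show (HomologicalComplex.sc' (P a) 2 1 0).g = ModuleCat.ofHom (LinearMap.lsmul R R a)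
      from P_d10 a] at hx
    exact hx
  have hx0 : (show R from x) = 0 := mem_nonZeroDivisors_iff_right.1 ha _ (by rw [mul_comm]; exact hx')
  rw [map_zero]
  exact hx0.symm

lemma exactP2 (i : ℕ) : (P a).ExactAt (i + 2) := by
  rw [HomologicalComplex.exactAt_iff]
  exact ShortComplex.exact_of_isZero_X₂ _
    (ModuleCat.isZero_of_subsingleton (ModuleCat.of R PUnit))

lemma quasi_pi (ha : a ∈ nonZeroDivisors R) : QuasiIso (pi a) where
  quasiIsoAt i := by
    match i with
    | 0 => exact quasi0
    | 1 => rw [quasiIsoAt_iff_exactAt _ _ (exactP1 ha)]; exact exact_single 0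
    | (i+2) => rw [quasiIsoAt_iff_exactAt _ _ (exactP2 i)]; exact exact_single (i+1)

def res (ha : a ∈ nonZeroDivisors R) : ProjectiveResolution (Q a) where
  complex := P a
  π := pi a
  quasiIso := quasi_pi ha

end Stmt14Aux

namespace Stmt14Aux
variable {R : Type u} [CommRing R] {a : R}

lemma subsingleton_iff_isZero (X : ModuleCat.{u} R) : Subsingleton X ↔ IsZero X := by
  constructor
  · intro h
    exact ModuleCat.isZero_of_subsingleton X
  · intro h
    have h0 : (𝟙 X : X ⟶ X) = 0 := h.eq_of_src _ _
    refine ⟨fun x y => ?_⟩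
    calc x = (𝟙 X : X ⟶ X) x := rfl
    _ = (0 : X ⟶ X) x := by rw [h0]
    _ = (𝟙 X : X ⟶ X) y := by rw [h0]; rfl
    _ = y := rfl

variable (E : ModuleCat.{u} R)

lemma subsing_hom : Subsingleton ((P a).X 2 ⟶ E) := by
  have : Subsingleton ((P a).X 2 : Type u) := (inferInstance : Subsingleton PUnit)
  refine ⟨fun f g => ModuleCat.hom_ext (LinearMap.ext fun x => ?_)⟩
  rw [Subsingleton.elim x 0, map_zero, map_zero]

lemma d01_apply (φ : XX R 0 ⟶ E) :
    ((P a).linearYonedaObj R E).d 0 1 φ =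
      ModuleCat.ofHom (LinearMap.lsmul R R a) ≫ φ := by
  rw [ChainComplex.linearYonedaObj_d]
  show Linear.leftComp R E ((P a).d 1 0) φ = _
  exact congrArg (fun f => f ≫ φ) (P_d10 a)

lemma exact_iff_surj :
    ((P a).linearYonedaObj R E).ExactAt 1 ↔
      ∀ ψ : (XX R 1 ⟶ E), ∃ φ : (XX R 0 ⟶ E),
        ModuleCat.ofHom (LinearMap.lsmul R R a) ≫ φ = ψ := by
  rw [((P a).linearYonedaObj R E).exactAt_iff' 0 1 2 (by simp) (by simp),
    ShortComplex.moduleCat_exact_iff]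
  constructor
  · intro h ψ
    obtain ⟨φ, hφ⟩ := h ψ (Subsingleton.elim (α := ((P a).X 2 ⟶ E))
      (h := subsing_hom E) _ _)
    refine ⟨φ, ?_⟩
    exact (d01_apply E φ).symm.trans hφ
  · intro h ψ _
    obtain ⟨φ, hφ⟩ := h ψ
    refine ⟨φ, ?_⟩
    show ((P a).linearYonedaObj R E).d 0 1 φ = ψ
    rw [d01_apply]
    exact hφ

lemma surj_iff_div :
    (∀ ψ : (XX R 1 ⟶ E), ∃ φ : (XX R 0 ⟶ E),
        ModuleCat.ofHom (LinearMap.lsmul R R a) ≫ φ = ψ) ↔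
      ∀ m : E, ∃ x : E, a • x = m := by
  constructor
  · intro h m
    obtain ⟨φ, hφ⟩ := h (ModuleCat.ofHom (LinearMap.toSpanSingleton R E m))
    refine ⟨φ (1 : R), ?_⟩
    have h1 := LinearMap.congr_fun (congrArg ModuleCat.Hom.hom hφ) (1 : R)
    have h2 : φ (a * (1 : R)) = (1 : R) • m := h1
    rw [mul_one, one_smul] at h2
    rw [← h2]
    calc a • φ (1 : R) = φ (a • (1 : R)) := (φ.hom.map_smul a (1 : R)).symm
    _ = φ a := by rw [smul_eq_mul, mul_one]
  · intro h ψ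
    obtain ⟨x, hx⟩ := h (ψ (1 : R))
    refine ⟨ModuleCat.ofHom (LinearMap.toSpanSingleton R E x), ?_⟩
    refine ModuleCat.hom_ext (LinearMap.ext fun (r : R) => ?_)
    show (LinearMap.toSpanSingleton R E x) ((LinearMap.lsmul R R a) r) = ψ r
    rw [LinearMap.lsmul_apply, LinearMap.toSpanSingleton_apply]
    calc (a • r) • x = (a * r) • x := rfl
    _ = (r * a) • x := by rw [mul_comm]
    _ = r • (a • x) := by rw [mul_smul]
    _ = r • ψ (1 : R) := by rw [hx]
    _ = ψ (r • (1 : R)) := (ψ.hom.map_smul r (1 : R)).symm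
    _ = ψ r := by congr 1; simp; rfl

lemma key (ha : a ∈ nonZeroDivisors R) (E : ModuleCat.{u} R) :
    (∀ m : E, ∃ x : E, a • x = m) ↔
      Subsingleton (((Ext R (ModuleCat.{u} R) 1).obj
        (Opposite.op (ModuleCat.of R (R ⧸ Ideal.span {a})))).obj E) := by
  rw [subsingleton_iff_isZero]
  have e : ((Ext R (ModuleCat.{u} R) 1).obj
      (Opposite.op (ModuleCat.of R (R ⧸ Ideal.span {a})))).obj E ≅
      ((P a).linearYonedaObj R E).homology 1 := (res ha).isoExt 1 E
  constructor
  · intro h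
    refine IsZero.of_iso ?_ e
    rw [← HomologicalComplex.exactAt_iff_isZero_homology]
    exact (exact_iff_surj E).2 ((surj_iff_div E).2 h)
  · intro h
    refine (surj_iff_div E).1 ((exact_iff_surj E).1 ?_)
    rw [HomologicalComplex.exactAt_iff_isZero_homology]
    exact IsZero.of_iso h e.symm

end Stmt14Aux

end

/-- Let `R` be a ZN-ring (zero-divisors = nilpotents) which is also an
NP-ring. Then an `R`-module `E` is nonnil-divisible iff `Ext¹_R(R/⟨a⟩, E) = 0` for every
non-nilpotent `a`. -/
theorem stmt_14 (R : Type u) [CommRing R]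
    (hNP : (nilradical R).IsPrime)
    (hZN : ∀ a : R, a ∈ nilradical R ↔ a ∉ nonZeroDivisors R)
    (E : ModuleCat.{u} R) :
    (∀ (m : E) (a : R), a ∉ nilradical R → ∃ x : E, a • x = m) ↔
      (∀ a : R, a ∉ nilradical R →
        Subsingleton (((Ext R (ModuleCat.{u} R) 1).obj
          (Opposite.op (ModuleCat.of R (R ⧸ Ideal.span {a})))).obj E)) := by
  have nzd : ∀ a : R, a ∉ nilradical R → a ∈ nonZeroDivisors R := fun a ha => by
    by_contra h
    exact ha ((hZN a).2 h)
  constructor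
  · intro h a ha
    exact (Stmt14Aux.key (nzd a ha) E).1 (fun m => h m a ha)
  · intro h m a ha
    exact (Stmt14Aux.key (nzd a ha) E).2 (h a ha) m
end

section
/- Let R be an NP-ring and E a nonnil-divisible R-module. Then for every prime ideal p of R, the localization E_p is a nonnil-divisible R_p-module. -/
/-- Let `R` be an NP-ring and `E` a nonnil-divisible `R`-module. Then for
every prime ideal `p`, the localization `E_p` is a nonnil-divisible `R_p`-module. -/
theorem stmt_15 (R : Type u) [CommRing R] (hNP : (nilradical R).IsPrime)
    (E : Type u) [AddCommGroup E] [Module R E]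
    (hE : ∀ (m : E) (a : R), a ∉ nilradical R → ∃ x : E, a • x = m)
    (p : Ideal R) [p.IsPrime] :
    ∀ (m : LocalizedModule p.primeCompl E) (a : Localization.AtPrime p),
      a ∉ nilradical (Localization.AtPrime p) →
      ∃ x : LocalizedModule p.primeCompl E, a • x = m := by
  intro m a ha
  induction m using LocalizedModule.induction_on with
  | h e s =>
    obtain ⟨r, t, rfl⟩ : ∃ (r : R) (t : p.primeCompl), Localization.mk r t = a := by
      obtain ⟨⟨r, t⟩, h⟩ := IsLocalization.mk'_surjective p.primeCompl a
      exact ⟨r, t, by rw [Localization.mk_eq_mk']; exact h⟩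
    have hr : r ∉ nilradical R := by
      intro hr
      apply ha
      rw [mem_nilradical] at hr ⊢
      obtain ⟨n, hn⟩ := hr
      refine ⟨n, ?_⟩
      rw [Localization.mk_pow, hn, Localization.mk_zero]
    obtain ⟨x, hx⟩ := hE ((t : R) • e) r hr
    refine ⟨LocalizedModule.mk x s, ?_⟩
    rw [LocalizedModule.mk_smul_mk, hx, LocalizedModule.mk_eq]
    refine ⟨1, ?_⟩
    simp only [one_smul, Submonoid.smul_def, Submonoid.coe_mul, mul_smul]
    rw [smul_comm]
end

section
/- Let R be an NP-ring, p a prime ideal of R, and M an R-module. Then M is φ-torsion over R if and only if M_p is φ-torsion over R_p. -/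
/-- Let `R` be an NP-ring, `p` a prime ideal and `M` an `R`-module. Then
`M` is φ-torsion over `R` iff `M_p` is φ-torsion over `R_p`. -/
theorem stmt_18 (R : Type u) [CommRing R] (hNP : (nilradical R).IsPrime)
    (p : Ideal R) [p.IsPrime]
    (M : Type u) [AddCommGroup M] [Module R M] :
    IsPhiTorsion R M ↔
      IsPhiTorsion (Localization.AtPrime p) (LocalizedModule p.primeCompl M) := by
  have hnp : nilradical R ≤ p := nilradical_le_prime p
  constructor
  · intro h x
    induction x using LocalizedModule.induction_on with
    | h m s =>
      obtain ⟨I, hI, hann⟩ := h m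
      rw [SetLike.not_le_iff_exists] at hI
      obtain ⟨a, haI, hanil⟩ := hI
      refine ⟨Ideal.span {algebraMap R (Localization.AtPrime p) a}, ?_, ?_⟩
      · intro hle
        have : algebraMap R (Localization.AtPrime p) a ∈ nilradical _ :=
          hle (Ideal.subset_span rfl)
        rw [mem_nilradical] at this
        obtain ⟨n, hn⟩ := this
        rw [← map_pow] at hn
        rw [IsLocalization.map_eq_zero_iff p.primeCompl] at hn
        obtain ⟨t, ht⟩ := hn
        have h0 : (t : R) * a ^ n ∈ nilradical R := by rw [ht]; exact (nilradical R).zero_mem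
        rcases hNP.mem_or_mem h0 with h1 | h1
        · exact t.2 (hnp h1)
        · obtain ⟨k, hk⟩ := mem_nilradical.mp h1
          exact hanil (mem_nilradical.mpr ⟨n * k, by rw [pow_mul, hk]⟩)
      · intro b hb
        rw [Ideal.mem_span_singleton] at hb
        obtain ⟨c, rfl⟩ := hb
        rw [mul_comm, mul_smul]
        have : (algebraMap R (Localization.AtPrime p) a) • LocalizedModule.mk m s = 0 := by
          rw [show algebraMap R (Localization.AtPrime p) a = Localization.mk a 1 from
            (Localization.mk_one_eq_algebraMap a).symm,
            LocalizedModule.mk_smul_mk, hann a haI, LocalizedModule.zero_mk]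
        rw [this, smul_zero]
  · intro h x
    obtain ⟨I, hI, hann⟩ := h (LocalizedModule.mk x 1)
    rw [SetLike.not_le_iff_exists] at hI
    obtain ⟨a, haI, hanil⟩ := hI
    induction a using Localization.induction_on with
    | H y =>
      obtain ⟨r, s⟩ := y
      have hsmul := hann _ haI
      rw [show (Localization.mk r s : Localization.AtPrime p) • LocalizedModule.mk x 1 =
        LocalizedModule.mk (r • x) (s * 1) from LocalizedModule.mk_smul_mk r x s 1] at hsmul
      rw [show (0 : LocalizedModule p.primeCompl M) = LocalizedModule.mk 0 1 from
        (LocalizedModule.zero_mk 1).symm, LocalizedModule.mk_eq] at hsmul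
      obtain ⟨u, hu⟩ := hsmul
      simp only [one_smul, smul_zero, Submonoid.smul_def] at hu
      refine ⟨Ideal.span {(u : R) * r}, ?_, ?_⟩
      · intro hle
        have h0 : (u : R) * r ∈ nilradical R := hle (Ideal.subset_span rfl)
        rcases hNP.mem_or_mem h0 with h1 | h1
        · exact u.2 (hnp h1)
        · obtain ⟨n, hn⟩ := mem_nilradical.mp h1
          exact hanil (mem_nilradical.mpr
            ⟨n, by rw [Localization.mk_pow, hn, Localization.mk_zero]⟩)
      · intro b hb
        rw [Ideal.mem_span_singleton] at hb
        obtain ⟨c, rfl⟩ := hb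
        rw [mul_comm, mul_smul, mul_smul, hu, smul_zero]
end

section
/- Let R be a strongly φ-ring (a φ-ring with Z(R) = Nil(R)). If every finitely generated nonnil ideal of R is projective, then every nonnil ideal of R is flat, and consequently every ideal J of R is φ-flat (Tor₁^R(R/I, J) = 0 for every nonnil ideal I). -/
open CategoryTheory

open TensorProduct LinearMap

section Aux

universe u

variable {R : Type u} [CommRing R]

/-- The multiplication map `I ⊗ J → J`. -/
noncomputable def stmt19.nuMap (I J : Ideal R) : (↥I ⊗[R] ↥J) →ₗ[R] ↥J :=
  TensorProduct.lift ((LinearMap.lsmul R ↥J).comp I.subtype)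

lemma stmt19.nuMap_tmul (I J : Ideal R) (i : ↥I) (j : ↥J) :
    stmt19.nuMap I J (i ⊗ₜ j) = (i : R) • j := rfl

lemma stmt19.subtype_comp_nuMap (I J : Ideal R) :
    J.subtype ∘ₗ stmt19.nuMap I J
      = I.subtype ∘ₗ (TensorProduct.rid R ↥I).toLinearMap ∘ₗ lTensor ↥I J.subtype := by
  apply TensorProduct.ext'
  intro i j
  simp only [LinearMap.comp_apply, stmt19.nuMap_tmul, lTensor_tmul,
    Submodule.subtype_apply, LinearEquiv.coe_coe, TensorProduct.rid_tmul,
    Submodule.coe_smul, SetLike.val_smul, smul_eq_mul]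
  ring

lemma stmt19.nuMap_injective (I J : Ideal R) [Module.Flat R ↥I] :
    Function.Injective (stmt19.nuMap I J) := by
  have h1 : Function.Injective (lTensor ↥I J.subtype) :=
    Module.Flat.lTensor_preserves_injective_linearMap _ J.injective_subtype
  have h2 : Function.Injective
      (I.subtype ∘ₗ (TensorProduct.rid R ↥I).toLinearMap ∘ₗ lTensor ↥I J.subtype) := by
    rw [LinearMap.coe_comp, LinearMap.coe_comp]
    exact I.injective_subtype.comp ((TensorProduct.rid R ↥I).injective.comp h1)
  rw [← stmt19.subtype_comp_nuMap] at h2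
  intro a b hab
  apply h2
  simp only [LinearMap.comp_apply, hab]

/-- Key injectivity: if `I` is a flat ideal and `π : P₀ → J` is a surjection onto an ideal
`J`, then `(R/I) ⊗ ker π → (R/I) ⊗ P₀` is injective. Stated for a general quotient-like
module `X` with a surjection `q : R → X` whose kernel is `I`. -/
lemma stmt19.stepA (I J : Ideal R) [Module.Flat R ↥I]
    {X : Type u} [AddCommGroup X] [Module R X]
    (q : R →ₗ[R] X) (hq : Function.Surjective q) (hexq : Function.Exact I.subtype q)
    {P₀ : Type u} [AddCommGroup P₀] [Module R P₀]
    (π : P₀ →ₗ[R] ↥J) (hπ : Function.Surjective π) :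
    Function.Injective (lTensor X (LinearMap.ker π).subtype) := by
  set Z := LinearMap.ker π with hZdef
  rw [← LinearMap.ker_eq_bot, eq_bot_iff]
  intro w hw
  rw [LinearMap.mem_ker] at hw
  obtain ⟨w', rfl⟩ := rTensor_surjective (↥Z) hq w
  set z : ↥Z := TensorProduct.lid R ↥Z w' with hz
  have hw' : w' = (1 : R) ⊗ₜ[R] z := by
    rw [hz, ← TensorProduct.lid_symm_apply, LinearEquiv.symm_apply_apply]
  rw [hw'] at hw
  have h0 : rTensor P₀ q ((1 : R) ⊗ₜ[R] ((z : P₀))) = 0 := by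
    have heq : lTensor X Z.subtype (rTensor ↥Z q ((1 : R) ⊗ₜ[R] z))
        = rTensor P₀ q ((1 : R) ⊗ₜ[R] (z : P₀)) := by
      simp only [rTensor_tmul, lTensor_tmul, Submodule.subtype_apply]
    rw [← heq]
    exact hw
  have hex : Function.Exact (rTensor P₀ I.subtype) (rTensor P₀ q) :=
    rTensor_exact P₀ hexq hq
  obtain ⟨t, ht⟩ := (hex _).mp h0
  -- the element `s := (1 ⊗ π) t` of `I ⊗ J` is zero
  have hcomm : J.subtype ∘ₗ (stmt19.nuMap I J) ∘ₗ (lTensor ↥I π)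
      = (J.subtype ∘ₗ (TensorProduct.lid R ↥J).toLinearMap ∘ₗ (lTensor R π))
          ∘ₗ (rTensor P₀ I.subtype) := by
    apply TensorProduct.ext'
    intro i p
    simp only [LinearMap.comp_apply, lTensor_tmul, rTensor_tmul,
      stmt19.nuMap_tmul, Submodule.subtype_apply, LinearEquiv.coe_coe,
      TensorProduct.lid_tmul, Submodule.coe_smul, SetLike.val_smul]
  have hs : stmt19.nuMap I J (lTensor ↥I π t) = 0 := by
    have h1 := LinearMap.congr_fun hcomm t
    simp only [LinearMap.comp_apply] at h1
    have hz0 : π (z : P₀) = 0 := z.2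
    rw [ht, lTensor_tmul, hz0, TensorProduct.tmul_zero] at h1
    simp only [map_zero, Submodule.subtype_apply] at h1
    exact Submodule.coe_eq_zero.mp h1
  have hs0 : lTensor ↥I π t = 0 := by
    apply stmt19.nuMap_injective I J
    rw [hs, map_zero]
  -- hence `t` comes from `I ⊗ Z`
  have hexIπ : Function.Exact (Z.subtype) π := by
    rw [LinearMap.exact_iff]
    exact (Submodule.range_subtype Z).symm
  have hexI : Function.Exact (lTensor ↥I Z.subtype) (lTensor ↥I π) :=
    lTensor_exact ↥I hexIπ hπ
  obtain ⟨u, hu⟩ := (hexI t).mp hs0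
  -- identify `rTensor u` with `1 ⊗ z`
  have hinjR : Function.Injective (lTensor R Z.subtype) :=
    Module.Flat.lTensor_preserves_injective_linearMap _ Z.injective_subtype
  have hβ : rTensor ↥Z I.subtype u = (1 : R) ⊗ₜ[R] z := by
    apply hinjR
    have comm2 : lTensor R Z.subtype ∘ₗ rTensor ↥Z I.subtype
        = rTensor P₀ I.subtype ∘ₗ lTensor ↥I Z.subtype := by
      rw [lTensor_comp_rTensor, rTensor_comp_lTensor]
    calc lTensor R Z.subtype (rTensor ↥Z I.subtype u)
        = rTensor P₀ I.subtype (lTensor ↥I Z.subtype u) := LinearMap.congr_fun comm2 u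
      _ = rTensor P₀ I.subtype t := by rw [hu]
      _ = (1 : R) ⊗ₜ[R] ((z : P₀)) := ht
      _ = lTensor R Z.subtype ((1 : R) ⊗ₜ[R] z) := by rw [lTensor_tmul]; rfl
  -- conclude
  rw [Submodule.mem_bot, hw', ← hβ]
  have hq0 : q ∘ₗ I.subtype = 0 := by
    ext x
    simp only [LinearMap.comp_apply, LinearMap.zero_apply, Submodule.subtype_apply]
    exact (hexq (x : R)).mpr ⟨x, rfl⟩
  calc rTensor ↥Z q (rTensor ↥Z I.subtype u)
      = rTensor ↥Z (q ∘ₗ I.subtype) u := by rw [rTensor_comp]; rfl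
    _ = 0 := by rw [hq0, rTensor_zero, LinearMap.zero_apply]

/-- Key exactness: tensoring a piece of a resolution of an ideal `J` with `R/I`
(for a flat ideal `I`) preserves exactness at the middle spot. -/
lemma stmt19.keyExact (I J : Ideal R) [Module.Flat R ↥I]
    {X : Type u} [AddCommGroup X] [Module R X]
    (q : R →ₗ[R] X) (hq : Function.Surjective q) (hexq : Function.Exact I.subtype q)
    {P₂ P₁ P₀ : Type u} [AddCommGroup P₂] [Module R P₂] [AddCommGroup P₁] [Module R P₁]
    [AddCommGroup P₀] [Module R P₀]
    (d₂ : P₂ →ₗ[R] P₁) (d₁ : P₁ →ₗ[R] P₀) (π : P₀ →ₗ[R] ↥J)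
    (h21 : Function.Exact d₂ d₁) (h10 : Function.Exact d₁ π)
    (hπ : Function.Surjective π) :
    Function.Exact (lTensor X d₂) (lTensor X d₁) := by
  set Z := LinearMap.ker π with hZdef
  have hd₁ : ∀ x, d₁ x ∈ Z := fun x => by
    rw [LinearMap.mem_ker]
    exact h10.apply_apply_eq_zero x
  set d₁' : P₁ →ₗ[R] ↥Z := d₁.codRestrict Z hd₁ with hd₁'
  have hsurj' : Function.Surjective d₁' := by
    rintro ⟨y, hy⟩
    obtain ⟨x, hx⟩ := (h10 y).mp hy
    exact ⟨x, Subtype.ext hx⟩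
  have hcoe : ∀ x, ((d₁' x : P₀)) = d₁ x := fun x => rfl
  have h21' : Function.Exact d₂ d₁' := by
    intro x
    rw [← h21 x]
    constructor
    · intro hx
      exact congrArg Subtype.val hx
    · intro hx
      exact Subtype.ext hx
  have hinj : Function.Injective (lTensor X Z.subtype) :=
    stmt19.stepA I J q hq hexq π hπ
  have hcomp : lTensor X d₁ = (lTensor X Z.subtype) ∘ₗ (lTensor X d₁') := by
    rw [← lTensor_comp]
    congr 1
  have hexact' : Function.Exact (lTensor X d₂) (lTensor X d₁') :=
    lTensor_exact X h21' hsurj'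
  intro y
  rw [hcomp, LinearMap.comp_apply]
  constructor
  · intro h0
    exact (hexact' y).mp (hinj (by rw [h0, map_zero]))
  · intro h0
    rw [(hexact' y).mpr h0, map_zero]

/-- Every nonnil ideal is flat, given that every f.g. nonnil ideal is projective. -/
lemma stmt19.flat_of_fg_proj
    (h : ∀ I : Ideal R, I.FG → ¬ I ≤ nilradical R → Module.Projective R I)
    (I : Ideal R) (hI : ¬ I ≤ nilradical R) : Module.Flat R ↥I := by
  rw [Module.Flat.iff_rTensor_injective]
  intro K _
  rw [injective_iff_map_eq_zero]
  intro x hx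
  obtain ⟨S, rfl⟩ := TensorProduct.exists_finset x
  obtain ⟨c, hcI, hcn⟩ := SetLike.not_le_iff_exists.mp hI
  set I₀ : Ideal R := Ideal.span (insert c ((fun p : ↥K × ↥I => (p.2 : R)) '' ↑S)) with hI₀
  have hle : I₀ ≤ I := by
    rw [Ideal.span_le]
    rintro y (rfl | ⟨p, _, rfl⟩)
    · exact hcI
    · exact p.2.2
  have hfg : I₀.FG := Submodule.fg_span ((S.finite_toSet.image _).insert c)
  have hnn : ¬ I₀ ≤ nilradical R := fun hcon =>
    hcn (hcon (Ideal.subset_span (Set.mem_insert _ _)))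
  haveI hproj : Module.Projective R ↥I₀ := h I₀ hfg hnn
  haveI hflat : Module.Flat R ↥I₀ := Module.Flat.of_projective
  set inc : ↥I₀ →ₗ[R] ↥I := Submodule.inclusion hle with hinc
  have hmem : ∀ p ∈ S, ((p : ↥K × ↥I).2 : R) ∈ I₀ := fun p hp =>
    Ideal.subset_span (Set.mem_insert_of_mem _ ⟨p, hp, rfl⟩)
  set x₀ : ↥K ⊗[R] ↥I₀ :=
    S.attach.sum (fun p => (p : ↥K × ↥I).1 ⊗ₜ[R]
      (⟨((p : ↥K × ↥I).2 : R), hmem p p.2⟩ : ↥I₀)) with hx₀def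
  have hx₀ : lTensor ↥K inc x₀ = S.sum fun p => p.1 ⊗ₜ[R] p.2 := by
    rw [hx₀def, map_sum, ← Finset.sum_attach S (fun p => p.1 ⊗ₜ[R] p.2)]
    apply Finset.sum_congr rfl
    intro p _
    rw [lTensor_tmul]
    congr 1
  have hcomm : lTensor R inc (rTensor ↥I₀ K.subtype x₀)
      = rTensor ↥I K.subtype (lTensor ↥K inc x₀) := by
    rw [← LinearMap.comp_apply, ← LinearMap.comp_apply,
      lTensor_comp_rTensor, rTensor_comp_lTensor]
  have h1 : lTensor R inc (rTensor ↥I₀ K.subtype x₀) = 0 := by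
    rw [hcomm, hx₀, hx]
  have hinj1 : Function.Injective (lTensor R inc) :=
    Module.Flat.lTensor_preserves_injective_linearMap inc (Submodule.inclusion_injective hle)
  have h2 : rTensor ↥I₀ K.subtype x₀ = 0 := hinj1 (by rw [h1, map_zero])
  have hinj0 : Function.Injective (rTensor ↥I₀ K.subtype) :=
    Module.Flat.rTensor_preserves_injective_linearMap K.subtype K.injective_subtype
  have h3 : x₀ = 0 := hinj0 (by rw [h2, map_zero])
  rw [← hx₀, h3, map_zero]

end Aux

/-- Let `R` be a strongly φ-ring (Nil(R) is a divided prime ideal and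
`Z(R) = Nil(R)`). If every finitely generated nonnil ideal of `R` is projective, then
every nonnil ideal of `R` is flat, and every ideal `J` of `R` is φ-flat, i.e.
`Tor₁^R(R/I, J) = 0` for every nonnil ideal `I`. -/
theorem stmt_19 (R : Type u) [CommRing R]
    (hp : (nilradical R).IsPrime)
    (hdiv : ∀ x ∉ nilradical R, nilradical R < Ideal.span {x})
    (hZN : ∀ a : R, a ∈ nilradical R ↔ a ∉ nonZeroDivisors R)
    (h : ∀ I : Ideal R, I.FG → ¬ I ≤ nilradical R → Module.Projective R I) :
    (∀ I : Ideal R, ¬ I ≤ nilradical R → Module.Flat R I) ∧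
      (∀ (J : Ideal R) (I : Ideal R), ¬ I ≤ nilradical R →
        Subsingleton (((Tor (ModuleCat.{u} R) 1).obj
          (ModuleCat.of R (R ⧸ I))).obj (ModuleCat.of R J))) := by
  have flat : ∀ I : Ideal R, ¬ I ≤ nilradical R → Module.Flat R I :=
    fun I hI => stmt19.flat_of_fg_proj h I hI
  refine ⟨flat, fun J I hI => ?_⟩
  haveI := flat I hI
  set F : ModuleCat.{u} R ⥤ ModuleCat.{u} R :=
    (MonoidalCategory.tensoringLeft (ModuleCat.{u} R)).obj (ModuleCat.of R (R ⧸ I)) with hF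
  obtain ⟨P⟩ := (inferInstance : HasProjectiveResolution (ModuleCat.of R ↥J)).out
  -- the relevant exactness facts about the resolution
  have hex21 : Function.Exact (P.complex.d 2 1).hom (P.complex.d 1 0).hom := by
    have h0 := P.exact_succ 0
    rwa [ShortComplex.ShortExact.moduleCat_exact_iff_function_exact] at h0
  let π₀ : P.complex.X 1 →ₗ[R] _ := (P.complex.d 1 0).hom
  let πJ : P.complex.X 0 →ₗ[R] ↥J := (P.π.f 0).hom
  have hπs : Function.Surjective πJ := by
    have hepi : Epi (P.π.f 0) := inferInstance
    rwa [ModuleCat.epi_iff_surjective] at hepi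
  have hex10 : Function.Exact (P.complex.d 1 0).hom πJ := by
    have hS : (ShortComplex.mk (P.complex.d 1 0) (P.π.f 0)
        P.complex_d_comp_π_f_zero).Exact :=
      ShortComplex.exact_of_g_is_cokernel _ P.isColimitCokernelCofork
    rwa [ShortComplex.ShortExact.moduleCat_exact_iff_function_exact] at hS
  have key : Function.Exact (lTensor (R ⧸ I) (P.complex.d 2 1).hom)
      (lTensor (R ⧸ I) (P.complex.d 1 0).hom) :=
    stmt19.keyExact I J (Submodule.mkQ I) (Submodule.mkQ_surjective I)
      (LinearMap.exact_subtype_mkQ I) (P.complex.d 2 1).hom (P.complex.d 1 0).hom πJ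
      hex21 hex10 hπs
  -- translate to the vanishing of the first left derived functor
  have hzero : Limits.IsZero ((F.leftDerived 1).obj (ModuleCat.of R ↥J)) := by
    refine Limits.IsZero.of_iso ?_ (P.isoLeftDerivedObj F 1)
    have hEx : ((F.mapHomologicalComplex (ComplexShape.down ℕ)).obj P.complex).ExactAt 1 := by
      rw [HomologicalComplex.exactAt_iff' _ 2 1 0
        (by simp [ChainComplex.prev]) (by simp [ChainComplex.next_nat_succ])]
      rw [ShortComplex.ShortExact.moduleCat_exact_iff_function_exact]
      exact key
    exact (HomologicalComplex.exactAt_iff_isZero_homology _ 1).mp hEx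
  show Subsingleton ((F.leftDerived 1).obj (ModuleCat.of R ↥J))
  have e := hzero.iso (ModuleCat.isZero_of_subsingleton (ModuleCat.of R PUnit))
  exact e.toLinearEquiv.toEquiv.subsingleton
end
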